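/- arXiv:0912.0615 — 4 statements merged into one kernel-verified Lean document; each statement's English description precedes it below -/
import Mathlib

section
/- Let f : [0,∞) → ℝ be nonincreasing and convex, and define h(z,m,x) := f(max(z,m) − x) − f(max(z, m − x)) for z ≥ 0 and 0 ≤ x ≤ m. Then for all z ≥ 0 and 0 < x ≤ m, h(z,m,x) + h(z, m−x, −x) ≥ 0. -/
/-- For a convex function: if `p < q ≤ r < s` with `q - p = s - r`, then
`f q + f r ≤ f p + f s`. -/
lemma convex_four_pt {f : ℝ → ℝ} (hconv : ConvexOn ℝ (Set.Ici 0) f)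
    {p q r s : ℝ} (hp : p ∈ Set.Ici (0:ℝ)) (hq : q ∈ Set.Ici (0:ℝ))
    (hr : r ∈ Set.Ici (0:ℝ)) (hs : s ∈ Set.Ici (0:ℝ))
    (hpq : p < q) (hqr : q ≤ r) (hrs : r < s) (hsum : q - p = s - r) :
    f q + f r ≤ f p + f s := by
  have h1 : (f q - f p) / (q - p) ≤ (f s - f p) / (s - p) :=
    hconv.secant_mono hp hq hs (ne_of_gt hpq) (by linarith) (by linarith)
  have h2 : (f p - f s) / (p - s) ≤ (f r - f s) / (r - s) :=
    hconv.secant_mono hs hp hr (by linarith) (by linarith) (by linarith)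
  have e1 : (f p - f s) / (p - s) = (f s - f p) / (s - p) := by
    rw [← neg_div_neg_eq]; ring_nf
  have e2 : (f r - f s) / (r - s) = (f s - f r) / (s - r) := by
    rw [← neg_div_neg_eq]; ring_nf
  rw [e1, e2] at h2
  have hd : 0 < q - p := by linarith
  have h3 : (f q - f p) / (q - p) ≤ (f s - f r) / (s - r) := by
    calc (f q - f p) / (q - p) ≤ (f s - f p) / (s - p) := h1
      _ ≤ (f s - f r) / (s - r) := h2
  rw [← hsum] at h3
  have := (div_le_div_iff_of_pos_right hd).mp h3
  linarith

/-- The payoff difference `h(z,m,x) = f(max z m - x) - f(max z (m - x))`. -/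
noncomputable def hFun (f : ℝ → ℝ) (z m x : ℝ) : ℝ :=
  f (max z m - x) - f (max z (m - x))

/-- If `f : [0,∞) → ℝ` is nonincreasing and convex, then for all `z ≥ 0` and
`0 < x ≤ m`, `h(z,m,x) + h(z, m - x, -x) ≥ 0`. -/
theorem hFun_add_nonneg (f : ℝ → ℝ) (hmono : AntitoneOn f (Set.Ici 0))
    (hconv : ConvexOn ℝ (Set.Ici 0) f) (z m x : ℝ) (hz : 0 ≤ z)
    (hx : 0 < x) (hxm : x ≤ m) :
    hFun f z m x + hFun f z (m - x) (-x) ≥ 0 := by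
  unfold hFun
  have hA : max z (m - x) ≥ 0 := le_max_of_le_left hz
  have hB : max z m ≥ 0 := le_max_of_le_left hz
  set A := max z (m - x) with hAdef
  set B := max z m with hBdef
  have hAB : A ≤ B := max_le_max le_rfl (by linarith)
  have hBxA : B - x ≤ A := by
    rcases le_total z m with h | h
    · rw [hBdef, max_eq_right h]; exact le_max_right _ _
    · rw [hBdef, max_eq_left h]; have : z - x ≤ z := by linarith
      exact le_trans (by linarith) (le_max_left z (m - x))
  have hs1 : max z (m - x - -x) = B := by rw [hBdef]; ring_nf
  have hs2 : A - -x = A + x := by ring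
  rw [hs1, hs2]
  -- goal: f (B - x) - f A + (f (A + x) - f B) ≥ 0
  rcases eq_or_lt_of_le hBxA with heq | hlt
  · rw [← heq]
    have h2 : B - x + x = B := by ring
    rw [h2]
    linarith
  · have key : f A + f B ≤ f (B - x) + f (A + x) := by
      apply convex_four_pt hconv
      · simp only [Set.mem_Ici]
        have : m - x ≤ B - x := by
          have : m ≤ B := le_max_right z m
          linarith
        linarith
      · exact hA
      · exact hB
      · simp only [Set.mem_Ici]; linarith
      · exact hlt
      · exact hAB
      · linarith
      · ring
    linarith
end

section
/- Let f : [0,∞) → ℝ be nonincreasing and convex with α := (f(z) − f(0))/z for fixed z > 0, and let h(z,m,x) := f(max(z,m) − x) − f(max(z, m − x)). Then α·z ≤ h(z,m,x) ≤ |α|·z for all m ≥ 0 and x ≤ m. -/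
private lemma key_slope (f : ℝ → ℝ) (hmono : AntitoneOn f (Set.Ici 0))
    (hconv : ConvexOn ℝ (Set.Ici 0) f) (z : ℝ) (hz : 0 < z)
    (a b : ℝ) (ha : 0 ≤ a) (hab : a ≤ b) (hzb : z ≤ b) (hbaz : b - a ≤ z) :
    f z - f 0 ≤ f a - f b ∧ f a - f b ≤ f 0 - f z := by
  have hfz : f z ≤ f 0 := hmono (by simp) (by simp [hz.le]) hz.le
  have hb : (0:ℝ) < b := lt_of_lt_of_le hz hzb
  have hba : f b ≤ f a := hmono (Set.mem_Ici.2 ha) (Set.mem_Ici.2 (le_trans ha hab)) hab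
  rcases eq_or_lt_of_le hab with rfl | hab'
  · constructor <;> linarith
  · have h1 : (f z - f 0) / (z - 0) ≤ (f b - f 0) / (b - 0) :=
      hconv.secant_mono (by simp) (by simp [hz.le]) (by simp [hb.le]) hz.ne' hb.ne' hzb
    have h2 : (f 0 - f b) / (0 - b) ≤ (f a - f b) / (a - b) :=
      hconv.secant_mono (Set.mem_Ici.2 hb.le) (by simp) (Set.mem_Ici.2 ha)
        (by linarith) (by linarith) ha
    have e1 : (f 0 - f b) / (0 - b) = (f b - f 0) / (b - 0) := by
      rw [← neg_div_neg_eq]; ring_nf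
    have e2 : (f a - f b) / (a - b) = (f b - f a) / (b - a) := by
      rw [← neg_div_neg_eq]; ring_nf
    rw [e1, e2] at h2
    have h3 : (f z - f 0) / z ≤ (f b - f a) / (b - a) := by
      simpa using le_trans h1 h2
    have hba' : (0:ℝ) < b - a := by linarith
    rw [div_le_div_iff₀ hz hba'] at h3
    constructor
    · linarith
    · nlinarith

/-- If `f : [0,∞) → ℝ` is nonincreasing and convex, `z > 0` and
`α = (f z - f 0)/z`, then `α * z ≤ h(z,m,x) ≤ |α| * z` for all `m ≥ 0` and
`x ≤ m`. -/
theorem hFun_bounds (f : ℝ → ℝ) (hmono : AntitoneOn f (Set.Ici 0))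
    (hconv : ConvexOn ℝ (Set.Ici 0) f) (z : ℝ) (hz : 0 < z)
    (α : ℝ) (hα : α = (f z - f 0) / z) (m x : ℝ) (hm : 0 ≤ m) (hxm : x ≤ m) :
    α * z ≤ hFun f z m x ∧ hFun f z m x ≤ |α| * z := by
  have hfz : f z ≤ f 0 := hmono (by simp) (by simp [hz.le]) hz.le
  have hαz : α * z = f z - f 0 := by
    rw [hα]; field_simp
  have hαneg : α ≤ 0 := by
    rw [hα]
    exact div_nonpos_of_nonpos_of_nonneg (by linarith) hz.le
  have habs : |α| * z = f 0 - f z := by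
    rw [abs_of_nonpos hαneg]; nlinarith
  set A := max z m - x with hA_def
  set B := max z (m - x) with hB_def
  have hA0 : 0 ≤ A := by
    have : m ≤ max z m := le_max_right _ _
    simp only [hA_def]; linarith
  have hzB : z ≤ B := le_max_left _ _
  have hABz : A - B ≤ z ∧ B - A ≤ z := by
    rcases le_total z m with h1 | h1 <;> rcases le_total z (m - x) with h2 | h2 <;>
      simp only [hA_def, hB_def, max_eq_left, max_eq_right, h1, h2] <;>
      constructor <;> linarith
  have hresult : f z - f 0 ≤ f A - f B ∧ f A - f B ≤ f 0 - f z := by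
    rcases le_total A B with hAB | hAB
    · exact key_slope f hmono hconv z hz A B hA0 hAB hzB (by linarith [hABz.2])
    · have := key_slope f hmono hconv z hz B A (le_trans hz.le hzB) hAB
        (le_trans hzB hAB) (by linarith [hABz.1])
      constructor <;> linarith [this.1, this.2]
  rw [hαz, habs]
  exact hresult
end

section
/- Let X_n = ξ₁ + … + ξ_n with i.i.d. steps satisfying ξ₁ ≥_st −ξ₁, M_n = max_{0≤k≤n} X_k, and let f : [0,∞) → ℝ be nonincreasing and convex. Then for all n and all z ≥ 0, E[f(max(z, M_n) − X_n)] ≥ E[f(max(z, M_n))]. -/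
open Finset MeasureTheory ProbabilityTheory

/-- Convexity: increments of a convex function grow to the right. -/
lemma KIC.convex_pair {f : ℝ → ℝ} (hconv : ConvexOn ℝ (Set.Ici 0) f)
    {p q s : ℝ} (hp : 0 ≤ p) (hpq : p ≤ q) (hs : 0 ≤ s) :
    f (p + s) + f q ≤ f p + f (q + s) := by
  rcases eq_or_lt_of_le hpq with rfl | hpq'
  · linarith
  rcases eq_or_lt_of_le hs with rfl | hs'
  · simp
  have hd : p < q + s := by linarith
  have hden : 0 < q + s - p := by linarith
  set lam : ℝ := (q - p) / (q + s - p) with hlam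
  have hlam0 : 0 ≤ lam := div_nonneg (by linarith) (by linarith)
  have hlam1 : 0 ≤ 1 - lam := by
    rw [hlam]; rw [sub_nonneg, div_le_one hden]; linarith
  have hsum : lam + (1 - lam) = 1 := by ring
  have hPmem : p ∈ Set.Ici (0:ℝ) := hp
  have hQmem : (q + s) ∈ Set.Ici (0:ℝ) := by
    simp only [Set.mem_Ici]; linarith
  have h1 := hconv.2 hPmem hQmem hlam0 hlam1 hsum
  have h2 := hconv.2 hPmem hQmem hlam1 hlam0 (by ring)
  have e1 : lam * p + (1 - lam) * (q + s) = p + s := by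
    rw [hlam]; field_simp; ring
  have e2 : (1 - lam) * p + lam * (q + s) = q := by
    rw [hlam]; field_simp; ring
  simp only [smul_eq_mul] at h1 h2
  rw [e1] at h1; rw [e2] at h2
  linarith

/-- The key deterministic ("CORE") inequality. -/
lemma KIC.core_det {φ : ℝ → ℝ}
    (hG4 : ∀ p q s : ℝ, 0 ≤ p → p ≤ q → 0 ≤ s → φ (q + s) - φ q ≤ φ (p + s) - φ p)
    {m s z : ℝ} (hm : 0 ≤ m) (hsm : s ≤ m) (hz : 0 ≤ z) :
    φ (max z m - s) + φ (max z (m - s) + s) ≤ φ (max z m) + φ (max z (m - s)) := by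
  rcases le_or_gt 0 s with hs | hs
  · have hp0 : 0 ≤ max z m - s := by
      have : s ≤ max z m := le_trans hsm (le_max_right _ _)
      linarith
    have hpq : max z m - s ≤ max z (m - s) := by
      rw [sub_le_iff_le_add]
      apply max_le
      · exact le_add_of_nonneg_of_le hs (le_max_left _ _) |>.trans (by linarith [le_max_left z (m-s)])
      · have : m - s ≤ max z (m - s) := le_max_right _ _
        linarith
    have := hG4 (max z m - s) (max z (m - s)) s hp0 hpq hs
    have he : max z m - s + s = max z m := by ring
    rw [he] at this
    linarith
  · -- apply the first case to (m - s, -s)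
    have hm' : 0 ≤ m - s := by linarith
    have hsm' : -s ≤ m - s := by linarith
    have hs' : 0 ≤ -s := by linarith
    have hp0 : 0 ≤ max z (m - s) - -s := by
      have : -s ≤ max z (m - s) := le_trans hsm' (le_max_right _ _)
      linarith
    have hpq : max z (m - s) - -s ≤ max z (m - s - -s) := by
      rw [sub_le_iff_le_add]
      apply max_le
      · exact le_trans (le_max_left z _) (by linarith [le_max_left z (m - s - -s)])
      · have : m - s - -s ≤ max z (m - s - -s) := le_max_right _ _
        linarith
    have := hG4 (max z (m - s) - -s) (max z (m - s - -s)) (-s) hp0 hpq hs'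
    have he : max z (m - s) - -s + -s = max z (m - s) := by ring
    have he2 : m - s - -s = m := by ring
    rw [he, he2] at this
    have he3 : max z m + -s = max z m - s := by ring
    have he4 : max z (m - s) - -s = max z (m - s) + s := by ring
    rw [he3, he4] at this
    linarith

/-- Truncation preserves the concave-increment property for monotone functions. -/
lemma KIC.G4_min {g : ℝ → ℝ} (hmono : Monotone g)
    (hG4 : ∀ p q s : ℝ, 0 ≤ p → p ≤ q → 0 ≤ s → g (q + s) - g q ≤ g (p + s) - g p)
    (c : ℝ) :
    ∀ p q s : ℝ, 0 ≤ p → p ≤ q → 0 ≤ s →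
      min (g (q + s)) c - min (g q) c ≤ min (g (p + s)) c - min (g p) c := by
  intro p q s hp hpq hs
  have hgpq : g p ≤ g q := hmono hpq
  have hps : g p ≤ g (p + s) := hmono (by linarith)
  have hqs : g q ≤ g (q + s) := hmono (by linarith)
  rcases le_or_gt c (g q) with hq | hq
  · have h1 : min (g (q + s)) c = c := min_eq_right (le_trans hq hqs)
    have h2 : min (g q) c = c := min_eq_right hq
    have h3 : min (g p) c ≤ min (g (p + s)) c := min_le_min hps le_rfl
    rw [h1, h2]; linarith
  · have h2 : min (g q) c = g q := min_eq_left hq.le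
    have h4 : min (g p) c = g p := min_eq_left (by linarith)
    rcases le_or_gt c (g (p + s)) with hps' | hps'
    · have h5 : min (g (p + s)) c = c := min_eq_right hps'
      have h6 : min (g (q + s)) c ≤ c := min_le_right _ _
      rw [h2, h4, h5]; linarith
    · have h5 : min (g (p + s)) c = g (p + s) := min_eq_left hps'.le
      have h6 : min (g (q + s)) c ≤ g (q + s) := min_le_left _ _
      have := hG4 p q s hp hpq hs
      rw [h2, h4, h5]; linarith

namespace KIC

/-- Partial sum of the first `k` coordinates. -/
def pSum (n k : ℕ) (x : Fin n → ℝ) : ℝ :=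
  ∑ i ∈ range k, if h : i < n then x ⟨i, h⟩ else 0

/-- Running maximum of the partial sums (including the empty one). -/
def Wmax (n : ℕ) (x : Fin n → ℝ) : ℝ :=
  (range (n + 1)).sup' nonempty_range_add_one (fun k => pSum n k x)

lemma pSum_zero (n : ℕ) (x : Fin n → ℝ) : pSum n 0 x = 0 := by
  simp [pSum]

lemma pSum_mono (n k : ℕ) {x y : Fin n → ℝ} (h : x ≤ y) :
    pSum n k x ≤ pSum n k y := by
  apply Finset.sum_le_sum
  intro i _
  by_cases hi : i < n
  · simp only [hi, dif_pos]; exact h _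
  · simp [hi]

lemma pSum_add_tail (n k : ℕ) (hk : k ≤ n) (x : Fin n → ℝ) :
    pSum n k x + ∑ i ∈ Ico k n, (if h : i < n then x ⟨i, h⟩ else 0) = pSum n n x := by
  simp only [pSum, range_eq_Ico]
  exact Finset.sum_Ico_consecutive _ (Nat.zero_le k) hk

lemma pSum_le_shift (n k : ℕ) (hk : k ≤ n) {x y : Fin n → ℝ} (h : x ≤ y) :
    pSum n k y ≤ pSum n k x + (pSum n n y - pSum n n x) := by
  have hx := pSum_add_tail n k hk x
  have hy := pSum_add_tail n k hk y
  have htail : ∑ i ∈ Ico k n, (if h : i < n then x ⟨i, h⟩ else 0) ≤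
      ∑ i ∈ Ico k n, (if h : i < n then y ⟨i, h⟩ else 0) := by
    apply Finset.sum_le_sum
    intro i _
    by_cases hi : i < n
    · simp only [hi, dif_pos]; exact h _
    · simp [hi]
  linarith

lemma pSum_le_Wmax (n k : ℕ) (hk : k ≤ n) (x : Fin n → ℝ) :
    pSum n k x ≤ Wmax n x := by
  rw [Wmax]
  exact Finset.le_sup' (fun k => pSum n k x) (mem_range.2 (Nat.lt_succ_of_le hk))

lemma Wmax_nonneg (n : ℕ) (x : Fin n → ℝ) : 0 ≤ Wmax n x := by
  have := pSum_le_Wmax n 0 (Nat.zero_le n) x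
  rwa [pSum_zero] at this

lemma sum_le_Wmax (n : ℕ) (x : Fin n → ℝ) : pSum n n x ≤ Wmax n x :=
  pSum_le_Wmax n n le_rfl x

lemma Wmax_le (n : ℕ) (x : Fin n → ℝ) {c : ℝ}
    (h : ∀ k ≤ n, pSum n k x ≤ c) : Wmax n x ≤ c :=
  Finset.sup'_le _ _ fun k hk => h k (Nat.lt_succ_iff.1 (mem_range.1 hk))

lemma Wmax_mono (n : ℕ) {x y : Fin n → ℝ} (h : x ≤ y) :
    Wmax n x ≤ Wmax n y :=
  Wmax_le n x fun k hk => le_trans (pSum_mono n k h) (pSum_le_Wmax n k hk y)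

lemma Wmax_lip (n : ℕ) {x y : Fin n → ℝ} (h : x ≤ y) :
    Wmax n y ≤ Wmax n x + (pSum n n y - pSum n n x) := by
  apply Wmax_le
  intro k hk
  have h1 := pSum_le_shift n k hk h
  have h2 := pSum_le_Wmax n k hk x
  linarith

lemma pSum_measurable (n k : ℕ) : Measurable (fun x : Fin n → ℝ => pSum n k x) := by
  apply Finset.measurable_sum
  intro i _
  by_cases hi : i < n
  · simp only [hi, dif_pos]; exact measurable_pi_apply _
  · simp only [hi, dif_neg, not_false_iff]; exact measurable_const

lemma Wmax_measurable (n : ℕ) : Measurable (Wmax n) := by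
  have : Wmax n = (range (n + 1)).sup' nonempty_range_add_one (fun k => pSum n k) := by
    funext x
    rw [Wmax, Finset.sup'_apply]
  rw [this]
  exact Finset.measurable_sup' _ fun k _ => pSum_measurable n k

/-- Negated reversal of a tuple. -/
def negrev (n : ℕ) (x : Fin n → ℝ) : Fin n → ℝ :=
  fun i => - x ⟨n - 1 - (i : ℕ), by have := i.isLt; omega⟩

lemma pSum_negrev (n k : ℕ) (hk : k ≤ n) (x : Fin n → ℝ) :
    pSum n k (negrev n x) = pSum n (n - k) x - pSum n n x := by
  have key : pSum n k (negrev n x) =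
      ∑ i ∈ Ico (n - k) n, (- if h : i < n then x ⟨i, h⟩ else 0) := by
    rw [pSum]
    apply Finset.sum_nbij' (i := fun i => n - 1 - i) (j := fun i => n - 1 - i)
    · intro a ha; rw [mem_range] at ha; rw [mem_Ico]; omega
    · intro a ha; rw [mem_Ico] at ha; rw [mem_range]; omega
    · intro a ha; rw [mem_range] at ha; omega
    · intro a ha; rw [mem_Ico] at ha; omega
    · intro a ha
      rw [mem_range] at ha
      have han : a < n := by omega
      have hrev : n - 1 - a < n := by omega
      simp only [han, dif_pos, hrev, negrev]
  rw [key]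
  rw [Finset.sum_neg_distrib]
  have := pSum_add_tail n (n - k) (Nat.sub_le n k) x
  linarith

lemma Wmax_negrev (n : ℕ) (x : Fin n → ℝ) :
    Wmax n (negrev n x) = Wmax n x - pSum n n x := by
  apply le_antisymm
  · apply Wmax_le
    intro k hk
    rw [pSum_negrev n k hk x]
    have := pSum_le_Wmax n (n - k) (Nat.sub_le n k) x
    linarith
  · rw [sub_le_iff_le_add]
    apply Wmax_le
    intro k hk
    have := pSum_le_Wmax n (n - k) (Nat.sub_le n k) (negrev n x)
    rw [pSum_negrev n (n - k) (Nat.sub_le n k) x] at this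
    have hkk : n - (n - k) = k := by omega
    rw [hkk] at this
    linarith

end KIC

namespace KIC

lemma Ici_eq_iInter (b : ℝ) : Set.Ici b = ⋂ k : ℕ, Set.Ioi (b - 1 / (k + 1)) := by
  ext x
  simp only [Set.mem_Ici, Set.mem_iInter, Set.mem_Ioi]
  constructor
  · intro h k
    have : (0:ℝ) < 1 / (k + 1) := by positivity
    linarith
  · intro h
    by_contra hx
    push_neg at hx
    obtain ⟨k, hk⟩ := exists_nat_one_div_lt (show (0:ℝ) < b - x by linarith)
    have := h k
    linarith

lemma meas_Ici_le {μ ν : Measure ℝ} [IsProbabilityMeasure μ] [IsProbabilityMeasure ν]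
    (hdom : ∀ a : ℝ, ν (Set.Ioi a) ≤ μ (Set.Ioi a)) (b : ℝ) :
    ν (Set.Ici b) ≤ μ (Set.Ici b) := by
  rw [Ici_eq_iInter b]
  have hanti : Antitone fun k : ℕ => Set.Ioi (b - 1 / (k + 1)) := by
    intro k l hkl
    apply Set.Ioi_subset_Ioi
    have h1 : (1:ℝ) / (l + 1) ≤ 1 / (k + 1) := by
      apply one_div_le_one_div_of_le
      · positivity
      · have : (k:ℝ) ≤ l := Nat.cast_le.2 hkl
        linarith
    linarith
  have hν := tendsto_measure_iInter_atTop (μ := ν)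
    (fun k => measurableSet_Ioi.nullMeasurableSet) hanti ⟨0, measure_ne_top _ _⟩
  have hμ := tendsto_measure_iInter_atTop (μ := μ)
    (fun k => measurableSet_Ioi.nullMeasurableSet) hanti ⟨0, measure_ne_top _ _⟩
  exact le_of_tendsto_of_tendsto' hν hμ fun k => hdom _

lemma meas_upper_le {μ ν : Measure ℝ} [IsProbabilityMeasure μ] [IsProbabilityMeasure ν]
    (hdom : ∀ a : ℝ, ν (Set.Ioi a) ≤ μ (Set.Ioi a))
    {U : Set ℝ} (hU : ∀ ⦃x y⦄, x ∈ U → x ≤ y → y ∈ U) : ν U ≤ μ U := by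
  rcases Set.eq_empty_or_nonempty U with rfl | hne
  · simp
  by_cases hbd : BddBelow U
  · set b := sInf U with hb
    have h2 : U ⊆ Set.Ici b := fun x hx => csInf_le hbd hx
    by_cases hbU : b ∈ U
    · have hEq : U = Set.Ici b := by
        apply subset_antisymm h2
        intro x hx
        exact hU hbU hx
      rw [hEq]
      exact meas_Ici_le hdom b
    · have hEq : U = Set.Ioi b := by
        apply subset_antisymm
        · intro x hx
          have hle : b ≤ x := h2 hx
          rcases eq_or_lt_of_le hle with rfl | hlt
          · exact absurd hx hbU
          · exact hlt
        · intro x hx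
          obtain ⟨u, hu, hux⟩ := (csInf_lt_iff hbd hne).1 hx
          exact hU hu hux.le
      rw [hEq]
      exact hdom b
  · have hEq : U = Set.univ := by
      apply Set.eq_univ_of_forall
      intro x
      obtain ⟨u, hu, hux⟩ := not_bddBelow_iff.1 hbd x
      exact hU hu hux.le
    rw [hEq]
    simp

/-- One-dimensional comparison of Lebesgue integrals of monotone
nonnegative functions under stochastic domination. -/
lemma lintegral_mono_dom {μ ν : Measure ℝ} [IsProbabilityMeasure μ] [IsProbabilityMeasure ν]
    (hdom : ∀ a : ℝ, ν (Set.Ioi a) ≤ μ (Set.Ioi a))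
    {h : ℝ → ℝ} (hmono : Monotone h) (h0 : ∀ t, 0 ≤ h t) :
    ∫⁻ t, ENNReal.ofReal (h t) ∂ν ≤ ∫⁻ t, ENNReal.ofReal (h t) ∂μ := by
  rw [lintegral_eq_lintegral_meas_lt ν (ae_of_all _ h0) hmono.measurable.aemeasurable,
    lintegral_eq_lintegral_meas_lt μ (ae_of_all _ h0) hmono.measurable.aemeasurable]
  apply lintegral_mono
  intro t
  apply meas_upper_le hdom
  intro x y hx hxy
  exact lt_of_lt_of_le hx (hmono hxy)



lemma insertNth_zero_le {n : ℕ} {a a' : ℝ} {w w' : Fin n → ℝ}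
    (ha : a ≤ a') (hw : w ≤ w') :
    (Fin.insertNth 0 a w : Fin (n+1) → ℝ) ≤ Fin.insertNth 0 a' w' := by
  intro j
  refine Fin.succAboveCases 0 ?_ ?_ j
  · simpa using ha
  · intro i
    simpa using hw i

/-- Comparison of integrals of coordinatewise-monotone functions against
product measures, under one-dimensional stochastic domination. -/
lemma pi_lintegral_mono_dom {μ ν : Measure ℝ} [IsProbabilityMeasure μ] [IsProbabilityMeasure ν]
    (hdom : ∀ a : ℝ, ν (Set.Ioi a) ≤ μ (Set.Ioi a)) :
    ∀ (n : ℕ) (F : (Fin n → ℝ) → ℝ) (_ : Monotone F) (_ : ∀ x, 0 ≤ F x)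
      (C : ℝ) (_ : ∀ x, F x ≤ C) (_ : Measurable F),
      ∫⁻ x, ENNReal.ofReal (F x) ∂(Measure.pi fun _ => ν) ≤
        ∫⁻ x, ENNReal.ofReal (F x) ∂(Measure.pi fun _ => μ) := by
  intro n
  induction n with
  | zero =>
    intro F hF h0 C hC hm
    have hconst : (fun x : Fin 0 → ℝ => ENNReal.ofReal (F x)) =
        fun _ => ENNReal.ofReal (F (fun i => i.elim0)) := by
      funext x
      congr 1
      congr 1
      exact Subsingleton.elim _ _
    rw [hconst, lintegral_const, lintegral_const]
    simp
  | succ n ih =>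
    intro F hF h0 C hC hm
    -- decompose the product measure
    have hTν := (measurePreserving_piFinSuccAbove (fun _ : Fin (n+1) => ν) 0).symm
      (MeasurableEquiv.piFinSuccAbove (fun _ : Fin (n+1) => ℝ) 0)
    have hTμ := (measurePreserving_piFinSuccAbove (fun _ : Fin (n+1) => μ) 0).symm
      (MeasurableEquiv.piFinSuccAbove (fun _ : Fin (n+1) => ℝ) 0)
    set T := MeasurableEquiv.piFinSuccAbove (fun _ : Fin (n+1) => ℝ) 0 with hT
    have hH : Measurable fun x : Fin (n+1) → ℝ => ENNReal.ofReal (F x) :=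
      ENNReal.measurable_ofReal.comp hm
    have hcomp : Measurable fun p : ℝ × (Fin n → ℝ) => ENNReal.ofReal (F (T.symm p)) :=
      hH.comp T.symm.measurable
    have eqν : ∫⁻ x, ENNReal.ofReal (F x) ∂(Measure.pi fun _ : Fin (n+1) => ν) =
        ∫⁻ a, ∫⁻ w, ENNReal.ofReal (F (T.symm (a, w))) ∂(Measure.pi fun _ : Fin n => ν) ∂ν := by
      rw [← hTν.lintegral_comp hH]
      rw [lintegral_prod _ hcomp.aemeasurable]
    have eqμ : ∫⁻ x, ENNReal.ofReal (F x) ∂(Measure.pi fun _ : Fin (n+1) => μ) =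
        ∫⁻ a, ∫⁻ w, ENNReal.ofReal (F (T.symm (a, w))) ∂(Measure.pi fun _ : Fin n => μ) ∂μ := by
      rw [← hTμ.lintegral_comp hH]
      rw [lintegral_prod _ hcomp.aemeasurable]
    rw [eqν, eqμ]
    have hsymm : ∀ (a : ℝ) (w : Fin n → ℝ), T.symm (a, w) = Fin.insertNth 0 a w :=
      fun a w => rfl
    have hinner_mono : ∀ a : ℝ, Monotone fun w : Fin n → ℝ => F (T.symm (a, w)) := by
      intro a w w' hw
      show F (T.symm (a, w)) ≤ F (T.symm (a, w'))
      rw [hsymm, hsymm]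
      exact hF (insertNth_zero_le le_rfl hw)
    have hinner_meas : ∀ a : ℝ, Measurable fun w : Fin n → ℝ => F (T.symm (a, w)) := by
      intro a
      exact (hm.comp T.symm.measurable).comp measurable_prodMk_left
    have hinner_bd : ∀ a : ℝ,
        ∫⁻ w, ENNReal.ofReal (F (T.symm (a, w))) ∂(Measure.pi fun _ : Fin n => μ) ≤
          ENNReal.ofReal C := by
      intro a
      calc ∫⁻ w, ENNReal.ofReal (F (T.symm (a, w))) ∂(Measure.pi fun _ : Fin n => μ)
          ≤ ∫⁻ _, ENNReal.ofReal C ∂(Measure.pi fun _ : Fin n => μ) :=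
            lintegral_mono fun w => ENNReal.ofReal_le_ofReal (hC _)
        _ = ENNReal.ofReal C := by rw [lintegral_const, measure_univ, mul_one]
    set G : ℝ → ℝ := fun a =>
      (∫⁻ w, ENNReal.ofReal (F (T.symm (a, w))) ∂(Measure.pi fun _ : Fin n => μ)).toReal
      with hG
    have hGfin : ∀ a, (∫⁻ w, ENNReal.ofReal (F (T.symm (a, w)))
        ∂(Measure.pi fun _ : Fin n => μ)) ≠ ⊤ :=
      fun a => lt_of_le_of_lt (hinner_bd a) ENNReal.ofReal_lt_top |>.ne
    have hGval : ∀ a, ENNReal.ofReal (G a) =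
        ∫⁻ w, ENNReal.ofReal (F (T.symm (a, w))) ∂(Measure.pi fun _ : Fin n => μ) :=
      fun a => ENNReal.ofReal_toReal (hGfin a)
    have hGmono : Monotone G := by
      intro a a' ha
      apply ENNReal.toReal_mono (hGfin a')
      apply lintegral_mono
      intro w
      apply ENNReal.ofReal_le_ofReal
      rw [hsymm, hsymm]
      exact hF (insertNth_zero_le ha le_rfl)
    have hGnn : ∀ a, 0 ≤ G a := fun a => ENNReal.toReal_nonneg
    calc ∫⁻ a, ∫⁻ w, ENNReal.ofReal (F (T.symm (a, w)))
            ∂(Measure.pi fun _ : Fin n => ν) ∂ν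
        ≤ ∫⁻ a, ∫⁻ w, ENNReal.ofReal (F (T.symm (a, w)))
            ∂(Measure.pi fun _ : Fin n => μ) ∂ν := by
          apply lintegral_mono
          intro a
          exact ih _ (hinner_mono a) (fun w => h0 _) C (fun w => hC _) (hinner_meas a)
      _ = ∫⁻ a, ENNReal.ofReal (G a) ∂ν := by
          apply lintegral_congr
          intro a
          rw [hGval]
      _ ≤ ∫⁻ a, ENNReal.ofReal (G a) ∂μ := lintegral_mono_dom hdom hGmono hGnn
      _ = ∫⁻ a, ∫⁻ w, ENNReal.ofReal (F (T.symm (a, w)))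
            ∂(Measure.pi fun _ : Fin n => μ) ∂μ := by
          apply lintegral_congr
          intro a
          rw [hGval]

end KIC

namespace KIC

/-- The joint law of finitely many transformed coordinates of an independent
family is the product of the individual laws. -/
lemma map_tuple_eq_pi {Ω : Type*} [MeasurableSpace Ω] {P : Measure Ω}
    [IsProbabilityMeasure P] {ξ : ℕ → Ω → ℝ} (hξ : ∀ i, Measurable (ξ i))
    (hind : iIndepFun ξ P)
    (n : ℕ) (ι : Fin n → ℕ) (hι : Function.Injective ι)
    (g : ℝ → ℝ) (hg : Measurable g) :
    Measure.map (fun ω (i : Fin n) => g (ξ (ι i) ω)) P =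
      Measure.pi (fun i => Measure.map (fun ω => g (ξ (ι i) ω)) P) := by
  classical
  have htuple : Measurable (fun ω (i : Fin n) => g (ξ (ι i) ω)) :=
    measurable_pi_lambda _ fun i => hg.comp (hξ (ι i))
  haveI : ∀ i : Fin n, IsProbabilityMeasure (Measure.map (fun ω => g (ξ (ι i) ω)) P) :=
    fun i => Measure.isProbabilityMeasure_map (hg.comp (hξ (ι i))).aemeasurable
  refine (Measure.pi_eq (μ := fun i : Fin n => Measure.map (fun ω => g (ξ (ι i) ω)) P) fun s hs => ?_).symm
  rw [Measure.map_apply htuple (MeasurableSet.univ_pi hs)]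
  set sets : ℕ → Set ℝ :=
    fun k => ⋃ i ∈ Finset.univ.filter (fun i : Fin n => ι i = k), g ⁻¹' s i with hsets
  have hkey : ∀ i : Fin n, sets (ι i) = g ⁻¹' s i := by
    intro i
    have hfilter : Finset.univ.filter (fun j : Fin n => ι j = ι i) = {i} := by
      ext j
      simp [hι.eq_iff]
    rw [hsets]
    simp only [hfilter]
    simp
  have hmeas_sets : ∀ k, k ∈ Finset.image ι Finset.univ → MeasurableSet (sets k) := by
    intro k _
    apply Set.Finite.measurableSet_biUnion (Set.toFinite _)
    intro i _
    exact hg (hs i)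
  have hpre : (fun ω (i : Fin n) => g (ξ (ι i) ω)) ⁻¹' Set.univ.pi s =
      ⋂ k ∈ Finset.image ι Finset.univ, ξ k ⁻¹' sets k := by
    ext ω
    simp only [Set.mem_preimage, Set.mem_univ_pi, Set.mem_iInter]
    constructor
    · rintro h k hk
      obtain ⟨i, _, rfl⟩ := Finset.mem_image.1 hk
      show ξ (ι i) ω ∈ sets (ι i)
      rw [hkey i]
      exact h i
    · intro h i
      have hk : ι i ∈ Finset.image ι Finset.univ :=
        Finset.mem_image.2 ⟨i, Finset.mem_univ i, rfl⟩
      have := h (ι i) hk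
      rw [hkey i] at this
      exact this
  rw [hpre, hind.measure_inter_preimage_eq_mul _ hmeas_sets,
    Finset.prod_image (fun i _ j _ h => hι h)]
  refine Finset.prod_congr rfl fun i _ => ?_
  rw [hkey i]
  show P (ξ (ι i) ⁻¹' (g ⁻¹' s i)) = Measure.map (fun ω => g (ξ (ι i) ω)) P (s i)
  rw [Measure.map_apply (f := fun ω => g (ξ (ι i) ω)) (hg.comp (hξ (ι i))) (hs i)]
  rfl

end KIC



/-- Corollary 2.4: for a random walk with i.i.d. steps stochastically
dominating their opposites, and `f : [0,∞) → ℝ` nonincreasing and convex,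
`E[f(max z (M n) - X n)] ≥ E[f(max z (M n))]` for all `n` and `z ≥ 0`.
Since `f ≤ f 0` on `[0,∞)`, the inequality of expectations (which may equal
`-∞`) is expressed through the Lebesgue integrals of `f 0 - f (⋯) ≥ 0`. -/
theorem key_inequality_corollary {Ω : Type*} [MeasurableSpace Ω] (P : Measure Ω)
    [IsProbabilityMeasure P]
    (ξ : ℕ → Ω → ℝ) (hξmeas : ∀ i, Measurable (ξ i))
    (hindep : iIndepFun ξ P)
    (hid : ∀ i, Measure.map (ξ i) P = Measure.map (ξ 0) P)
    (hst : ∀ a : ℝ, P {ω | a < ξ 0 ω} ≥ P {ω | a < -ξ 0 ω})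
    (X : ℕ → Ω → ℝ) (hX : ∀ n ω, X n ω = ∑ i ∈ range n, ξ i ω)
    (M : ℕ → Ω → ℝ) (hM : ∀ n ω, M n ω = ⨆ k : Fin (n + 1), X k ω)
    (f : ℝ → ℝ) (hmono : AntitoneOn f (Set.Ici 0))
    (hconv : ConvexOn ℝ (Set.Ici 0) f)
    (n : ℕ) (z : ℝ) (hz : 0 ≤ z) :
    ∫⁻ ω, ENNReal.ofReal (f 0 - f (max z (M n ω) - X n ω)) ∂P ≤
      ∫⁻ ω, ENNReal.ofReal (f 0 - f (max z (M n ω))) ∂P := by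
  classical
  open KIC in
  -- laws
  set μ : Measure ℝ := Measure.map (ξ 0) P with hμdef
  set ν : Measure ℝ := Measure.map Neg.neg μ with hνdef
  haveI hμprob : IsProbabilityMeasure μ := Measure.isProbabilityMeasure_map (hξmeas 0).aemeasurable
  haveI hνprob : IsProbabilityMeasure ν := Measure.isProbabilityMeasure_map measurable_neg.aemeasurable
  have hdom : ∀ a : ℝ, ν (Set.Ioi a) ≤ μ (Set.Ioi a) := by
    intro a
    have h1 : μ (Set.Ioi a) = P {ω | a < ξ 0 ω} := by
      rw [hμdef, Measure.map_apply (hξmeas 0) measurableSet_Ioi]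
      rfl
    have h2 : ν (Set.Ioi a) = P {ω | a < -ξ 0 ω} := by
      rw [hνdef, hμdef, Measure.map_map measurable_neg (hξmeas 0),
        Measure.map_apply (measurable_neg.comp (hξmeas 0)) measurableSet_Ioi]
      rfl
    rw [h1, h2]
    exact hst a
  -- tuples
  set tuple : Ω → (Fin n → ℝ) := fun ω i => ξ i ω with htuple_def
  set tuple' : Ω → (Fin n → ℝ) := fun ω i => -ξ (n - 1 - (i : ℕ)) ω with htuple'_def
  have htuple_meas : Measurable tuple := measurable_pi_lambda _ fun i => hξmeas i
  have htuple'_meas : Measurable tuple' := measurable_pi_lambda _ fun i => (hξmeas _).neg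
  have htt' : ∀ ω, tuple' ω = negrev n (tuple ω) := fun ω => rfl
  -- laws of tuples
  have hlawμ : Measure.map tuple P = Measure.pi (fun _ : Fin n => μ) := by
    have hbr := map_tuple_eq_pi hξmeas hindep n (fun i => (i : ℕ)) Fin.val_injective
      id measurable_id
    simp only [id_eq] at hbr
    rw [htuple_def, hbr]
    congr 1
    funext i
    exact hid i
  have hlawν : Measure.map tuple' P = Measure.pi (fun _ : Fin n => ν) := by
    have hinj : Function.Injective (fun i : Fin n => n - 1 - (i : ℕ)) := by
      intro a b hab
      have ha := a.isLt
      have hb := b.isLt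
      apply Fin.ext
      simp only at hab
      omega
    have hbr := map_tuple_eq_pi hξmeas hindep n (fun i : Fin n => n - 1 - (i : ℕ)) hinj
      (fun t => -t) measurable_neg
    rw [htuple'_def, hbr]
    congr 1
    funext i
    have hcompose : (fun ω => -ξ (n - 1 - (i : ℕ)) ω) = Neg.neg ∘ ξ (n - 1 - (i : ℕ)) := rfl
    rw [hcompose, ← Measure.map_map measurable_neg (hξmeas _), hid _]
  -- the functionals
  set u : (Fin n → ℝ) → ℝ := fun x => max z (Wmax n x) with hu_def
  set v : (Fin n → ℝ) → ℝ := fun x => u x - pSum n n x with hv_def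
  have hu_meas : Measurable u := measurable_const.max (Wmax_measurable n)
  have hv_meas : Measurable v := hu_meas.sub (pSum_measurable n n)
  have hu_nonneg : ∀ x, 0 ≤ u x := fun x => le_trans hz (le_max_left _ _)
  have hv_nonneg : ∀ x, 0 ≤ v x := by
    intro x
    have h1 : pSum n n x ≤ Wmax n x := sum_le_Wmax n x
    have h2 : Wmax n x ≤ u x := le_max_right _ _
    rw [hv_def]
    dsimp only
    linarith
  -- identify the integrands
  have hMn : ∀ ω, M n ω = Wmax n (tuple ω) := by
    intro ω
    have hXk : ∀ k : ℕ, k ≤ n → X k ω = pSum n k (tuple ω) := by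
      intro k hk
      rw [hX, pSum]
      apply Finset.sum_congr rfl
      intro i hi
      have hin : i < n := lt_of_lt_of_le (mem_range.1 hi) hk
      simp [hin, htuple_def]
    rw [hM]
    apply le_antisymm
    · apply ciSup_le
      intro k
      have hk : (k : ℕ) ≤ n := Nat.lt_succ_iff.1 k.isLt
      rw [hXk k hk]
      exact pSum_le_Wmax n k hk _
    · apply Wmax_le
      intro k hk
      rw [← hXk k hk]
      exact le_ciSup (f := fun k : Fin (n + 1) => X (k : ℕ) ω)
        (Set.Finite.bddAbove (Set.finite_range _)) (⟨k, Nat.lt_succ_of_le hk⟩ : Fin (n + 1))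
  have hXn : ∀ ω, X n ω = pSum n n (tuple ω) := by
    intro ω
    rw [hX, pSum]
    apply Finset.sum_congr rfl
    intro i hi
    have hin : i < n := mem_range.1 hi
    simp [hin, htuple_def]
  have hVrw : ∀ ω, max z (M n ω) - X n ω = v (tuple ω) := by
    intro ω
    rw [hv_def, hu_def, hMn, hXn]
  have hUrw : ∀ ω, max z (M n ω) = u (tuple ω) := by
    intro ω
    rw [hu_def, hMn]
  -- the base function g0
  set g0 : ℝ → ℝ := fun t => f 0 - f (max t 0) with hg0_def
  have hg0_mono : Monotone g0 := by
    intro t t' htt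
    apply sub_le_sub_left
    exact hmono (le_max_right t 0) (le_max_right t' 0) (max_le_max htt le_rfl)
  have hg0_nonneg : ∀ t, 0 ≤ g0 t := by
    intro t
    have := hmono (Set.mem_Ici.2 le_rfl) (le_max_right t 0) (le_max_right t 0)
    rw [hg0_def]
    dsimp only
    linarith
  have hg0_eq : ∀ t, 0 ≤ t → g0 t = f 0 - f t := by
    intro t ht
    rw [hg0_def]
    dsimp only
    rw [max_eq_left ht]
  have hg0_G4 : ∀ p q s : ℝ, 0 ≤ p → p ≤ q → 0 ≤ s →
      g0 (q + s) - g0 q ≤ g0 (p + s) - g0 p := by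
    intro p q s hp hpq hs
    have hcp := KIC.convex_pair hconv hp hpq hs
    rw [hg0_eq _ (by linarith), hg0_eq _ (by linarith),
      hg0_eq _ (by linarith), hg0_eq _ hp]
    linarith
  -- rewrite the goal
  have hgoal_L : (fun ω => ENNReal.ofReal (f 0 - f (max z (M n ω) - X n ω))) =
      fun ω => ENNReal.ofReal (g0 (v (tuple ω))) := by
    funext ω
    rw [← hVrw ω, hg0_eq _ (by rw [hVrw ω]; exact hv_nonneg _)]
  have hgoal_R : (fun ω => ENNReal.ofReal (f 0 - f (max z (M n ω)))) =
      fun ω => ENNReal.ofReal (g0 (u (tuple ω))) := by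
    funext ω
    rw [← hUrw ω, hg0_eq _ (by rw [hUrw ω]; exact hu_nonneg _)]
  calc ∫⁻ ω, ENNReal.ofReal (f 0 - f (max z (M n ω) - X n ω)) ∂P
      = ∫⁻ ω, ENNReal.ofReal (g0 (v (tuple ω))) ∂P := by rw [hgoal_L]
    _ ≤ ∫⁻ ω, ENNReal.ofReal (g0 (u (tuple ω))) ∂P := ?key
    _ = ∫⁻ ω, ENNReal.ofReal (f 0 - f (max z (M n ω))) ∂P := by rw [hgoal_R]
  case key =>
    -- pointwise supremum representation
    have hsup_pt : ∀ r : ℝ, ⨆ c : ℕ, ENNReal.ofReal (min r (c : ℝ)) = ENNReal.ofReal r := by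
      intro r
      apply le_antisymm
      · exact iSup_le fun c => ENNReal.ofReal_le_ofReal (min_le_left _ _)
      · obtain ⟨c, hc⟩ := exists_nat_ge r
        refine le_iSup_of_le c ?_
        rw [min_eq_left hc]
    have hmc : ∀ (q : Ω → ℝ), Measurable q →
        ∫⁻ ω, ENNReal.ofReal (q ω) ∂P =
          ⨆ c : ℕ, ∫⁻ ω, ENNReal.ofReal (min (q ω) (c : ℝ)) ∂P := by
      intro q hq
      rw [← lintegral_iSup]
      · apply lintegral_congr
        intro ω
        exact (hsup_pt (q ω)).symm
      · intro c
        exact ENNReal.measurable_ofReal.comp (hq.min measurable_const)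
      · intro c c' hcc ω
        apply ENNReal.ofReal_le_ofReal
        exact min_le_min le_rfl (Nat.cast_le.2 hcc)
    have hg0_meas : Measurable g0 := hg0_mono.measurable
    have hqv_meas : Measurable fun ω => g0 (v (tuple ω)) :=
      hg0_meas.comp (hv_meas.comp htuple_meas)
    have hqu_meas : Measurable fun ω => g0 (u (tuple ω)) :=
      hg0_meas.comp (hu_meas.comp htuple_meas)
    rw [hmc _ hqv_meas, hmc _ hqu_meas]
    apply iSup_mono
    intro c
    -- the truncated inequality
    set cR : ℝ := (c : ℝ) with hcR_def
    have hcR0 : (0:ℝ) ≤ cR := Nat.cast_nonneg c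
    set φ : ℝ → ℝ := fun t => min (g0 t) cR with hφ_def
    have hφmono : Monotone φ := hg0_mono.min monotone_const
    have hφnn : ∀ t, 0 ≤ φ t := fun t => le_min (hg0_nonneg t) hcR0
    have hφle : ∀ t, φ t ≤ cR := fun t => min_le_right _ _
    have hφG4 := KIC.G4_min hg0_mono hg0_G4 cR
    have hφmeas : Measurable φ := hφmono.measurable
    -- pointwise CORE inequality
    have hcore : ∀ ω, φ (v (tuple ω)) + φ (v (tuple' ω)) ≤
        φ (u (tuple ω)) + φ (u (tuple' ω)) := by
      intro ω
      set x := tuple ω with hx_def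
      have hW : Wmax n (negrev n x) = Wmax n x - pSum n n x := KIC.Wmax_negrev n x
      have hS : pSum n n (negrev n x) = - pSum n n x := by
        rw [KIC.pSum_negrev n n le_rfl, Nat.sub_self, KIC.pSum_zero]
        ring
      have hc := KIC.core_det (φ := φ) hφG4 (m := Wmax n x) (s := pSum n n x)
        (KIC.Wmax_nonneg n x) (KIC.sum_le_Wmax n x) hz
      have e1 : v x = max z (Wmax n x) - pSum n n x := rfl
      have e2 : v (negrev n x) = max z (Wmax n x - pSum n n x) + pSum n n x := by
        show max z (Wmax n (negrev n x)) - pSum n n (negrev n x) = _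
        rw [hW, hS]
        ring
      have e3 : u x = max z (Wmax n x) := rfl
      have e4 : u (negrev n x) = max z (Wmax n x - pSum n n x) := by
        show max z (Wmax n (negrev n x)) = _
        rw [hW]
      rw [htt' ω, ← hx_def, e1, e2, e3, e4]
      linarith [hc]
    -- measurability of composed integrands
    have hm_vt : Measurable fun ω => ENNReal.ofReal (φ (v (tuple ω))) :=
      ENNReal.measurable_ofReal.comp (hφmeas.comp (hv_meas.comp htuple_meas))
    have hm_vt' : Measurable fun ω => ENNReal.ofReal (φ (v (tuple' ω))) :=
      ENNReal.measurable_ofReal.comp (hφmeas.comp (hv_meas.comp htuple'_meas))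
    have hm_ut : Measurable fun ω => ENNReal.ofReal (φ (u (tuple ω))) :=
      ENNReal.measurable_ofReal.comp (hφmeas.comp (hu_meas.comp htuple_meas))
    have hm_v : Measurable fun x => ENNReal.ofReal (φ (v x)) :=
      ENNReal.measurable_ofReal.comp (hφmeas.comp hv_meas)
    have hm_u : Measurable fun x => ENNReal.ofReal (φ (u x)) :=
      ENNReal.measurable_ofReal.comp (hφmeas.comp hu_meas)
    -- integrated CORE inequality
    have hsum : (∫⁻ ω, ENNReal.ofReal (φ (v (tuple ω))) ∂P) +
        (∫⁻ ω, ENNReal.ofReal (φ (v (tuple' ω))) ∂P) ≤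
        (∫⁻ ω, ENNReal.ofReal (φ (u (tuple ω))) ∂P) +
        (∫⁻ ω, ENNReal.ofReal (φ (u (tuple' ω))) ∂P) := by
      rw [← lintegral_add_left hm_vt, ← lintegral_add_left hm_ut]
      apply lintegral_mono
      intro ω
      calc ENNReal.ofReal (φ (v (tuple ω))) + ENNReal.ofReal (φ (v (tuple' ω)))
          = ENNReal.ofReal (φ (v (tuple ω)) + φ (v (tuple' ω))) :=
            (ENNReal.ofReal_add (hφnn _) (hφnn _)).symm
        _ ≤ ENNReal.ofReal (φ (u (tuple ω)) + φ (u (tuple' ω))) :=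
            ENNReal.ofReal_le_ofReal (hcore ω)
        _ = ENNReal.ofReal (φ (u (tuple ω))) + ENNReal.ofReal (φ (u (tuple' ω))) :=
            ENNReal.ofReal_add (hφnn _) (hφnn _)
    -- transport to product measures
    have htrLμ : ∫⁻ ω, ENNReal.ofReal (φ (v (tuple ω))) ∂P =
        ∫⁻ x, ENNReal.ofReal (φ (v x)) ∂(Measure.pi fun _ : Fin n => μ) := by
      rw [← hlawμ, lintegral_map hm_v htuple_meas]
    have htrLν : ∫⁻ ω, ENNReal.ofReal (φ (v (tuple' ω))) ∂P =
        ∫⁻ x, ENNReal.ofReal (φ (v x)) ∂(Measure.pi fun _ : Fin n => ν) := by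
      rw [← hlawν, lintegral_map hm_v htuple'_meas]
    have htrRμ : ∫⁻ ω, ENNReal.ofReal (φ (u (tuple ω))) ∂P =
        ∫⁻ x, ENNReal.ofReal (φ (u x)) ∂(Measure.pi fun _ : Fin n => μ) := by
      rw [← hlawμ, lintegral_map hm_u htuple_meas]
    have htrRν : ∫⁻ ω, ENNReal.ofReal (φ (u (tuple' ω))) ∂P =
        ∫⁻ x, ENNReal.ofReal (φ (u x)) ∂(Measure.pi fun _ : Fin n => ν) := by
      rw [← hlawν, lintegral_map hm_u htuple'_meas]
    set πμ : Measure (Fin n → ℝ) := Measure.pi (fun _ : Fin n => μ) with hπμ_def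
    set πν : Measure (Fin n → ℝ) := Measure.pi (fun _ : Fin n => ν) with hπν_def
    haveI : IsProbabilityMeasure πμ := by rw [hπμ_def]; infer_instance
    haveI : IsProbabilityMeasure πν := by rw [hπν_def]; infer_instance
    set Lμ := ∫⁻ x, ENNReal.ofReal (φ (v x)) ∂πμ with hLμ_def
    set Lν := ∫⁻ x, ENNReal.ofReal (φ (v x)) ∂πν with hLν_def
    set Rμ := ∫⁻ x, ENNReal.ofReal (φ (u x)) ∂πμ with hRμ_def
    set Rν := ∫⁻ x, ENNReal.ofReal (φ (u x)) ∂πν with hRν_def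
    rw [htrLμ, htrLν, htrRμ, htrRν] at hsum
    -- the monotone comparison
    set stuffC : (Fin n → ℝ) → ℝ := fun x => φ (u x) - φ (v x) + cR with hstuff_def
    have hstuff_nn : ∀ x, 0 ≤ stuffC x := by
      intro x
      have h1 := hφle (v x)
      have h2 := hφnn (u x)
      show (0:ℝ) ≤ φ (u x) - φ (v x) + cR
      linarith
    have hstuff_bd : ∀ x, stuffC x ≤ 2 * cR := by
      intro x
      have h1 := hφle (u x)
      have h2 := hφnn (v x)
      show φ (u x) - φ (v x) + cR ≤ 2 * cR
      linarith
    have hstuff_mono : Monotone stuffC := by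
      intro x y hxy
      have hWl := KIC.Wmax_lip n hxy
      have hWm := KIC.Wmax_mono n hxy
      have hu_le : u x ≤ u y := max_le_max le_rfl hWm
      have hv_le : v y ≤ v x := by
        show max z (Wmax n y) - pSum n n y ≤ max z (Wmax n x) - pSum n n x
        have h1 : max z (Wmax n y) ≤ max z (Wmax n x) + (pSum n n y - pSum n n x) := by
          apply max_le
          · have h2 : z ≤ max z (Wmax n x) := le_max_left _ _
            have h3 := KIC.pSum_mono n n hxy
            linarith
          · have h2 : Wmax n x ≤ max z (Wmax n x) := le_max_right _ _
            linarith
        linarith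
      have h4 := hφmono hu_le
      have h5 := hφmono hv_le
      show φ (u x) - φ (v x) + cR ≤ φ (u y) - φ (v y) + cR
      linarith
    have hstuff_meas : Measurable stuffC :=
      ((hφmeas.comp hu_meas).sub (hφmeas.comp hv_meas)).add_const _
    have hScomp : (∫⁻ x, ENNReal.ofReal (stuffC x) ∂πν) ≤
        ∫⁻ x, ENNReal.ofReal (stuffC x) ∂πμ :=
      KIC.pi_lintegral_mono_dom hdom n stuffC hstuff_mono hstuff_nn (2 * cR)
        hstuff_bd hstuff_meas
    set Sμ := ∫⁻ x, ENNReal.ofReal (stuffC x) ∂πμ with hSμ_def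
    set Sν := ∫⁻ x, ENNReal.ofReal (stuffC x) ∂πν with hSν_def
    -- bound lemma
    have hb : ∀ (ρ : Measure (Fin n → ℝ)), IsProbabilityMeasure ρ →
        ∀ (F : (Fin n → ℝ) → ℝ) (b : ℝ), (∀ x, F x ≤ b) →
        (∫⁻ x, ENNReal.ofReal (F x) ∂ρ) ≤ ENNReal.ofReal b := by
      intro ρ hρ F b hFb
      calc ∫⁻ x, ENNReal.ofReal (F x) ∂ρ
          ≤ ∫⁻ _, ENNReal.ofReal b ∂ρ :=
            lintegral_mono fun x => ENNReal.ofReal_le_ofReal (hFb x)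
        _ = ENNReal.ofReal b := by rw [lintegral_const, measure_univ, mul_one]
    have hLμfin : Lμ ≠ ⊤ :=
      (lt_of_le_of_lt (hb πμ inferInstance _ cR fun x => hφle _) ENNReal.ofReal_lt_top).ne
    have hLνfin : Lν ≠ ⊤ :=
      (lt_of_le_of_lt (hb πν inferInstance _ cR fun x => hφle _) ENNReal.ofReal_lt_top).ne
    have hRμfin : Rμ ≠ ⊤ :=
      (lt_of_le_of_lt (hb πμ inferInstance _ cR fun x => hφle _) ENNReal.ofReal_lt_top).ne
    have hRνfin : Rν ≠ ⊤ :=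
      (lt_of_le_of_lt (hb πν inferInstance _ cR fun x => hφle _) ENNReal.ofReal_lt_top).ne
    have hSμfin : Sμ ≠ ⊤ :=
      (lt_of_le_of_lt (hb πμ inferInstance _ (2 * cR) hstuff_bd) ENNReal.ofReal_lt_top).ne
    have hSνfin : Sν ≠ ⊤ :=
      (lt_of_le_of_lt (hb πν inferInstance _ (2 * cR) hstuff_bd) ENNReal.ofReal_lt_top).ne
    -- identities S + L = R + cR
    have hm_stuff : Measurable fun x => ENNReal.ofReal (stuffC x) :=
      ENNReal.measurable_ofReal.comp hstuff_meas
    have hident : ∀ (ρ : Measure (Fin n → ℝ)), IsProbabilityMeasure ρ →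
        (∫⁻ x, ENNReal.ofReal (stuffC x) ∂ρ) + (∫⁻ x, ENNReal.ofReal (φ (v x)) ∂ρ) =
          (∫⁻ x, ENNReal.ofReal (φ (u x)) ∂ρ) + ENNReal.ofReal cR := by
      intro ρ hρ
      have hpt : ∀ x, ENNReal.ofReal (stuffC x) + ENNReal.ofReal (φ (v x)) =
          ENNReal.ofReal (φ (u x)) + ENNReal.ofReal cR := by
        intro x
        calc ENNReal.ofReal (stuffC x) + ENNReal.ofReal (φ (v x))
            = ENNReal.ofReal (stuffC x + φ (v x)) :=
              (ENNReal.ofReal_add (hstuff_nn x) (hφnn _)).symm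
          _ = ENNReal.ofReal (φ (u x) + cR) := by
              congr 1
              show φ (u x) - φ (v x) + cR + φ (v x) = φ (u x) + cR
              ring
          _ = ENNReal.ofReal (φ (u x)) + ENNReal.ofReal cR :=
              ENNReal.ofReal_add (hφnn _) hcR0
      rw [← lintegral_add_left hm_stuff]
      rw [lintegral_congr hpt]
      rw [lintegral_add_right _ measurable_const]
      rw [lintegral_const, measure_univ, mul_one]
    have hidμ := hident πμ inferInstance
    have hidν := hident πν inferInstance
    -- pass to real numbers
    have htconv : ∀ {a b : ENNReal}, a ≠ ⊤ → b ≠ ⊤ → a + b ≠ ⊤ :=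
      fun ha hb => ENNReal.add_ne_top.2 ⟨ha, hb⟩
    have hsumR : Lμ.toReal + Lν.toReal ≤ Rμ.toReal + Rν.toReal := by
      have := ENNReal.toReal_mono (htconv hRμfin hRνfin) hsum
      rwa [ENNReal.toReal_add hLμfin hLνfin, ENNReal.toReal_add hRμfin hRνfin] at this
    have hSR : Sν.toReal ≤ Sμ.toReal := ENNReal.toReal_mono hSμfin hScomp
    have hcfin : ENNReal.ofReal cR ≠ ⊤ := ENNReal.ofReal_ne_top
    have hidμR : Sμ.toReal + Lμ.toReal = Rμ.toReal + cR := by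
      have := congrArg ENNReal.toReal hidμ
      rwa [ENNReal.toReal_add hSμfin hLμfin, ENNReal.toReal_add hRμfin hcfin,
        ENNReal.toReal_ofReal hcR0] at this
    have hidνR : Sν.toReal + Lν.toReal = Rν.toReal + cR := by
      have := congrArg ENNReal.toReal hidν
      rwa [ENNReal.toReal_add hSνfin hLνfin, ENNReal.toReal_add hRνfin hcfin,
        ENNReal.toReal_ofReal hcR0] at this
    have hfinal : Lμ.toReal ≤ Rμ.toReal := by linarith
    have hfinal' : Lμ ≤ Rμ := (ENNReal.toReal_le_toReal hLμfin hRμfin).1 hfinal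
    -- reassemble
    calc ∫⁻ ω, ENNReal.ofReal (min (g0 (v (tuple ω))) (c : ℝ)) ∂P
        = Lμ := by rw [← htrLμ]
      _ ≤ Rμ := hfinal'
      _ = ∫⁻ ω, ENNReal.ofReal (min (g0 (u (tuple ω))) (c : ℝ)) ∂P := by rw [← htrRμ]
end

section
/- Let X_n be a random walk with i.i.d. symmetric steps (ξ₁ has the same distribution as −ξ₁), N a positive integer, M_n the running maximum, and f : [0,∞) → ℝ nonincreasing and convex. Then any stopping time τ ≤ N satisfying P(X_τ = M_τ or τ = N) = 1 attains the supremum sup_{τ ≤ N} E[f(M_N − X_τ)]. -/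
open Finset MeasureTheory ProbabilityTheory

open scoped ENNReal

/-- Two-point majorization inequality for convex functions on `[0,∞)`. -/
lemma rwopt_conv2 {f : ℝ → ℝ} (hconv : ConvexOn ℝ (Set.Ici 0) f)
    {a x y b : ℝ} (ha : 0 ≤ a) (hax : a ≤ x) (hxb : x ≤ b) (hay : a ≤ y)
    (hsum : x + y = a + b) : f x + f y ≤ f a + f b := by
  rcases eq_or_lt_of_le (hax.trans hxb) with h | hab
  · have hxa : x = a := le_antisymm (by linarith) hax
    have hya : y = a := by nlinarith
    rw [hxa, hya, ← h]
  · set lam : ℝ := (b - x) / (b - a) with hlam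
    have hba : (0:ℝ) < b - a := by linarith
    have hlam0 : 0 ≤ lam := div_nonneg (by linarith) hba.le
    have hlam1 : lam ≤ 1 := by
      rw [hlam, div_le_one hba]; linarith
    have hx' : lam * (b - a) = b - x := div_mul_cancel₀ _ hba.ne'
    have hxcomb : x = lam * a + (1 - lam) * b := by linear_combination hx'
    have hycomb : y = (1 - lam) * a + lam * b := by linear_combination hsum - hxcomb
    have hmask : (0:ℝ) ≤ 1 - lam := by linarith
    have hsum1 : lam + (1 - lam) = 1 := by ring
    have hsum2 : (1 - lam) + lam = 1 := by ring
    have hbmem : b ∈ Set.Ici (0:ℝ) := Set.mem_Ici.mpr (ha.trans (hax.trans hxb))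
    have h1 := hconv.2 (Set.mem_Ici.mpr ha) hbmem hlam0 hmask hsum1
    have h2 := hconv.2 (Set.mem_Ici.mpr ha) hbmem hmask hlam0 hsum2
    rw [smul_eq_mul, smul_eq_mul, smul_eq_mul, smul_eq_mul] at h1 h2
    calc f x + f y = f (lam * a + (1-lam) * b) + f ((1-lam) * a + lam * b) := by
          rw [← hxcomb, ← hycomb]
      _ ≤ (lam * f a + (1-lam) * f b) + ((1-lam) * f a + lam * f b) := add_le_add h1 h2
      _ = f a + f b := by ring

/-- The key pathwise convexity inequality. -/
lemma rwopt_L1 {f : ℝ → ℝ} (hmono : AntitoneOn f (Set.Ici 0))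
    (hconv : ConvexOn ℝ (Set.Ici 0) f)
    {d m s : ℝ} (hd : 0 ≤ d) (hm : 0 ≤ m) (hsm : s ≤ m) :
    f (max d m) + f (max d (m - s)) ≤ f (max d m - s) + f (max (d + s) m) := by
  rcases le_or_gt 0 s with hs | hs
  · -- s ≥ 0
    rcases le_or_gt m d with hdm | hdm
    · -- d ≥ m : midpoint convexity with points d-s, d+s
      have h1 : max d m = d := max_eq_left hdm
      have h2 : max (d+s) m = d + s := max_eq_left (by linarith)
      have h3 : max d (m - s) = d := max_eq_left (by linarith)
      rw [h1, h2, h3]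
      have := rwopt_conv2 hconv (a := d - s) (x := d) (y := d) (b := d + s)
        (by linarith [hsm.trans hdm]) (by linarith) (by linarith) (by linarith) (by ring)
      linarith
    · rcases le_or_gt (d + s) m with hds | hds
      · -- d < m, d + s ≤ m
        have h1 : max d m = m := max_eq_right hdm.le
        have h2 : max (d+s) m = m := max_eq_right hds
        rw [h1, h2]
        have h4 : m - s ≤ max d (m - s) := le_max_right _ _
        have := hmono (Set.mem_Ici.mpr (by linarith : (0:ℝ) ≤ m - s))
          (Set.mem_Ici.mpr (le_trans (by linarith) h4)) h4
        linarith
      · -- d < m < d + s : majorization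
        have h1 : max d m = m := max_eq_right hdm.le
        have h2 : max (d+s) m = d + s := max_eq_left hds.le
        have h3 : max d (m - s) = d := max_eq_left (by linarith)
        rw [h1, h2, h3]
        have := rwopt_conv2 hconv (a := m - s) (x := d) (y := m) (b := d + s)
          (by linarith) (by linarith) (by linarith) (by linarith) (by ring)
        linarith
  · -- s < 0
    rcases le_or_gt (m - s) d with hdm | hdm
    · -- d ≥ m - s : midpoint
      have h1 : max d m = d := max_eq_left (by linarith)
      have h2 : max (d+s) m = d + s := max_eq_left (by linarith)
      have h3 : max d (m - s) = d := max_eq_left hdm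
      rw [h1, h2, h3]
      have := rwopt_conv2 hconv (a := d + s) (x := d) (y := d) (b := d - s)
        (by linarith) (by linarith) (by linarith) (by linarith) (by ring)
      linarith
    · rcases le_or_gt d m with hds | hds
      · -- d ≤ m : equality
        have h1 : max d m = m := max_eq_right hds
        have h2 : max (d+s) m = m := max_eq_right (by linarith)
        have h3 : max d (m-s) = m - s := max_eq_right (by linarith)
        rw [h1, h2, h3]; linarith
      · -- m < d < m - s : majorization
        have h1 : max d m = d := max_eq_left hds.le
        have h2 : max (d+s) m = m := max_eq_right (by linarith)
        have h3 : max d (m-s) = m - s := max_eq_right hdm.le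
        rw [h1, h2, h3]
        have := rwopt_conv2 hconv (a := m) (x := d) (y := m - s) (b := d - s)
          hm hds.le (by linarith) (by linarith) (by ring)
        linarith

namespace RWOpt
variable {N j : ℕ}

def pS (N k : ℕ) (x : Fin N → ℝ) : ℝ := ∑ i : Fin N, if (i : ℕ) < k then x i else 0
def pM (N k : ℕ) (x : Fin N → ℝ) : ℝ :=
  (Finset.range (k+1)).sup' Finset.nonempty_range_add_one (fun l => pS N l x)
def pT (N j : ℕ) (hj : j ≤ N) (x : Fin N → ℝ) : ℝ :=
  (Finset.Icc j N).sup' (Finset.nonempty_Icc.mpr hj) (fun l => pS N l x)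
def eIdx (N j : ℕ) (i : Fin N) : Fin N :=
  if h : (i : ℕ) < j then i else ⟨j + (N - 1 - (i : ℕ)), by have := i.isLt; omega⟩
def op (N j : ℕ) (x : Fin N → ℝ) : Fin N → ℝ :=
  fun i => if (i : ℕ) < j then x i else - x (eIdx N j i)
lemma eIdx_invol (N j : ℕ) (hj : j ≤ N) (i : Fin N) : eIdx N j (eIdx N j i) = i := by
  unfold eIdx
  by_cases h : (i : ℕ) < j
  · simp [h]
  · have hi := i.isLt
    rw [dif_neg h]
    have h2 : ¬ (j + (N - 1 - (i:ℕ)) < j) := by omega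
    rw [dif_neg h2]
    apply Fin.ext
    simp only
    omega
lemma eIdx_lt' (N j : ℕ) (i : Fin N) (h : (i:ℕ) < j) : eIdx N j i = i := by
  unfold eIdx; rw [dif_pos h]
lemma eIdx_ge (N j : ℕ) (i : Fin N) (h : ¬ (i:ℕ) < j) :
    (eIdx N j i : ℕ) = j + (N - 1 - (i:ℕ)) := by
  unfold eIdx; rw [dif_neg h]

/-- the equiv given by `eIdx` -/
def eEquiv (N j : ℕ) (hj : j ≤ N) : Equiv (Fin N) (Fin N) :=
  ⟨eIdx N j, eIdx N j, eIdx_invol N j hj, eIdx_invol N j hj⟩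

lemma pS_op_low (hj : j ≤ N) (k : ℕ) (hk : k ≤ j) (x : Fin N → ℝ) :
    pS N k (op N j x) = pS N k x := by
  unfold pS
  refine Finset.sum_congr rfl fun i _ => ?_
  by_cases h : (i:ℕ) < k
  · rw [if_pos h, if_pos h]
    unfold op
    rw [if_pos (lt_of_lt_of_le h hk)]
  · rw [if_neg h, if_neg h]

lemma pS_op_high (hj : j ≤ N) (k : ℕ) (hjk : j ≤ k) (hk : k ≤ N) (x : Fin N → ℝ) :
    pS N k (op N j x) = pS N j x - pS N N x + pS N (j + N - k) x := by
  have step1 : pS N k (op N j x)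
      = pS N j x + ∑ i : Fin N, (if j ≤ (i:ℕ) ∧ (i:ℕ) < k then -(x (eIdx N j i)) else 0) := by
    unfold pS
    rw [← Finset.sum_add_distrib]
    refine Finset.sum_congr rfl fun i _ => ?_
    by_cases h1 : (i:ℕ) < j
    · rw [if_pos (lt_of_lt_of_le h1 hjk), if_pos h1, if_neg (by omega)]
      unfold op; rw [if_pos h1]; ring
    · rw [if_neg h1]
      by_cases h2 : (i:ℕ) < k
      · rw [if_pos h2, if_pos (by omega)]
        unfold op; rw [if_neg h1]; ring
      · rw [if_neg h2, if_neg (by omega)]; ring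
  have step2 : ∑ i : Fin N, (if j ≤ (i:ℕ) ∧ (i:ℕ) < k then -(x (eIdx N j i)) else 0)
      = ∑ i : Fin N, (if j + N - k ≤ (i:ℕ) then -(x i) else 0) := by
    refine Fintype.sum_equiv (eEquiv N j hj) _ _ fun i => ?_
    show _ = (if j + N - k ≤ ((eIdx N j i):ℕ) then -(x (eIdx N j i)) else 0)
    by_cases h1 : (i:ℕ) < j
    · have he : eIdx N j i = i := eIdx_lt' N j i h1
      rw [he, if_neg (by omega), if_neg (by omega)]
    · have he := eIdx_ge N j i h1
      have hi := i.isLt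
      by_cases h2 : (i:ℕ) < k
      · rw [if_pos (by omega), if_pos (by omega)]
      · rw [if_neg (by omega), if_neg (by omega)]
  have step3 : ∑ i : Fin N, (if j + N - k ≤ (i:ℕ) then -(x i) else 0)
      = - pS N N x + pS N (j + N - k) x := by
    unfold pS
    rw [← Finset.sum_neg_distrib, ← Finset.sum_add_distrib]
    refine Finset.sum_congr rfl fun i _ => ?_
    have hi := i.isLt
    by_cases h : (i:ℕ) < j + N - k
    · rw [if_neg (by omega), if_pos hi, if_pos h]; ring
    · rw [if_pos (by omega), if_pos hi, if_neg h]; ring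
  rw [step1, step2, step3]; ring

lemma range_split (hj : j ≤ N) :
    Finset.range (N+1) = Finset.range (j+1) ∪ Finset.Icc j N := by
  ext n; simp only [Finset.mem_range, Finset.mem_union, Finset.mem_Icc]; omega

lemma pM_split (hj : j ≤ N) (x : Fin N → ℝ) :
    pM N N x = max (pM N j x) (pT N j hj x) := by
  unfold pM pT
  have := Finset.sup'_union (s₁ := Finset.range (j+1)) (s₂ := Finset.Icc j N)
    Finset.nonempty_range_add_one (Finset.nonempty_Icc.mpr hj) (fun l => pS N l x)
  rw [← this]
  congr 1
  exact range_split hj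

lemma pT_op (hj : j ≤ N) (x : Fin N → ℝ) :
    pT N j hj (op N j x) = pS N j x - pS N N x + pT N j hj x := by
  unfold pT
  have h1 : ∀ l ∈ Finset.Icc j N,
      pS N l (op N j x) = (pS N j x - pS N N x) + pS N (j + N - l) x := by
    intro l hl
    rw [Finset.mem_Icc] at hl
    exact pS_op_high hj l hl.1 hl.2 x
  rw [Finset.sup'_congr _ rfl h1, ← Finset.add_sup']
  congr 1
  apply le_antisymm
  · refine Finset.sup'_le _ _ fun l hl => ?_
    rw [Finset.mem_Icc] at hl
    exact Finset.le_sup' (f := fun l => pS N l x) (Finset.mem_Icc.mpr ⟨by omega, by omega⟩)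
  · refine Finset.sup'_le _ _ fun l hl => ?_
    rw [Finset.mem_Icc] at hl
    have : pS N l x = pS N (j + N - (j + N - l)) x := by congr 1; omega
    rw [this]
    exact Finset.le_sup' (f := fun l' => pS N (j + N - l') x)
      (Finset.mem_Icc.mpr ⟨by omega, by omega⟩)

lemma pM_op_low (hj : j ≤ N) (x : Fin N → ℝ) : pM N j (op N j x) = pM N j x := by
  unfold pM
  refine Finset.sup'_congr _ rfl fun l hl => ?_
  rw [Finset.mem_range] at hl
  exact pS_op_low hj l (by omega) x

lemma pM_op (hj : j ≤ N) (x : Fin N → ℝ) :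
    pM N N (op N j x) = max (pM N j x) (pS N j x - pS N N x + pT N j hj x) := by
  rw [pM_split hj, pM_op_low hj, pT_op hj]

lemma pS_le_pM (k : ℕ) (x : Fin N → ℝ) : pS N k x ≤ pM N k x :=
  Finset.le_sup' (f := fun l => pS N l x) (Finset.mem_range.mpr (by omega))

lemma pS_le_pT (hj : j ≤ N) (k : ℕ) (h1 : j ≤ k) (h2 : k ≤ N) (x : Fin N → ℝ) :
    pS N k x ≤ pT N j hj x :=
  Finset.le_sup' (f := fun l => pS N l x) (Finset.mem_Icc.mpr ⟨h1, h2⟩)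


lemma measurable_pS (N k : ℕ) : Measurable (pS N k) := by
  unfold pS
  exact Finset.measurable_sum _ fun i _ => by
    split
    · exact measurable_pi_apply i
    · exact measurable_const

lemma measurable_pM (N k : ℕ) : Measurable (pM N k) := by
  have h := Finset.measurable_sup' (s := Finset.range (k+1)) Finset.nonempty_range_add_one
    (f := fun l => pS N l) (fun l _ => measurable_pS N l)
  have : pM N k = (Finset.range (k+1)).sup' Finset.nonempty_range_add_one (fun l => pS N l) := by
    funext x; rw [Finset.sup'_apply]; rfl
  rw [this]; exact h

lemma measurable_op (N j : ℕ) : Measurable (op N j) := by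
  apply measurable_pi_lambda
  intro i
  unfold op
  split
  · exact measurable_pi_apply i
  · exact (measurable_pi_apply _).neg

section MeasureStuff

variable {N j : ℕ} (μ : Measure ℝ) [IsProbabilityMeasure μ]

lemma map_op_pi (hj : j ≤ N) (hneg : μ.map (fun t => -t) = μ) :
    (Measure.pi (fun _ : Fin N => μ)).map (op N j) = Measure.pi (fun _ : Fin N => μ) := by
  refine (Measure.pi_eq fun s hs => ?_).symm
  have hs' : ∀ i : Fin N, MeasurableSet
      ((fun i : Fin N => if (i:ℕ) < j then s i else (fun t : ℝ => -t) ⁻¹' s (eIdx N j i)) i) := by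
    intro i
    dsimp only
    by_cases h : (i:ℕ) < j
    · rw [if_pos h]; exact hs i
    · rw [if_neg h]; exact (hs _).preimage measurable_neg
  have hpre : op N j ⁻¹' (Set.pi Set.univ s) = Set.pi Set.univ
      (fun i : Fin N => if (i:ℕ) < j then s i else (fun t : ℝ => -t) ⁻¹' s (eIdx N j i)) := by
    ext x
    simp only [Set.mem_preimage, Set.mem_pi, Set.mem_univ, forall_true_left, true_implies]
    constructor
    · intro H i
      by_cases h : (i:ℕ) < j
      · rw [if_pos h]
        have := H i
        unfold op at this
        rwa [if_pos h] at this
      · rw [if_neg h]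
        have hK : ¬ ((eIdx N j i : ℕ) < j) := by rw [eIdx_ge N j i h]; omega
        have := H (eIdx N j i)
        unfold op at this
        rw [if_neg hK, eIdx_invol N j hj i] at this
        simpa using this
    · intro H i
      unfold op
      by_cases h : (i:ℕ) < j
      · rw [if_pos h]
        have := H i
        rwa [if_pos h] at this
      · rw [if_neg h]
        have hK : ¬ ((eIdx N j i : ℕ) < j) := by rw [eIdx_ge N j i h]; omega
        have := H (eIdx N j i)
        rw [if_neg hK, eIdx_invol N j hj i] at this
        simpa using this
  rw [Measure.map_apply (measurable_op N j) (MeasurableSet.univ_pi hs), hpre,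
    Measure.pi_pi]
  have hterm : ∀ i : Fin N,
      μ ((fun i : Fin N => if (i:ℕ) < j then s i else (fun t : ℝ => -t) ⁻¹' s (eIdx N j i)) i)
      = μ (s (eIdx N j i)) := by
    intro i
    dsimp only
    by_cases h : (i:ℕ) < j
    · simp only [if_pos h, eIdx_lt' N j i h]
    · simp only [if_neg h]
      rw [← Measure.map_apply measurable_neg (hs (eIdx N j i)), hneg]
  rw [Finset.prod_congr rfl (fun i _ => hterm i)]
  exact Equiv.prod_comp (eEquiv N j hj) (fun i => μ (s i))

lemma lintegral_op_inv (hj : j ≤ N) (hneg : μ.map (fun t => -t) = μ)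
    {G : (Fin N → ℝ) → ℝ≥0∞} (hG : Measurable G) :
    ∫⁻ x, G x ∂(Measure.pi (fun _ : Fin N => μ))
      = ∫⁻ x, G (op N j x) ∂(Measure.pi (fun _ : Fin N => μ)) := by
  conv_lhs => rw [← map_op_pi μ hj hneg]
  exact lintegral_map hG (measurable_op N j)

/-- core comparison lemma on path space: stopping at `j` (with the maximum running
to `N`) has larger `h`-cost than continuing to the end, on a time-`j` cylinder
event `B`. -/
lemma slice_core (hj : j ≤ N) (hneg : μ.map (fun t => -t) = μ)
    {B : Set (Fin N → ℝ)} (hB : MeasurableSet B)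
    (hBop : ∀ x, op N j x ∈ B ↔ x ∈ B)
    {h : ℝ → ℝ≥0∞} (hh : Measurable h)
    (hkey : ∀ d m s : ℝ, 0 ≤ d → 0 ≤ m → s ≤ m →
      h (max d m - s) + h (max (d+s) m) ≤ h (max d m) + h (max d (m-s))) :
    ∫⁻ x in B, h (pM N N x - pS N N x) ∂(Measure.pi (fun _ : Fin N => μ))
      ≤ ∫⁻ x in B, h (pM N N x - pS N j x) ∂(Measure.pi (fun _ : Fin N => μ)) := by
  classical
  set π := Measure.pi (fun _ : Fin N => μ) with hπdef
  set I₂ : (Fin N → ℝ) → ℝ≥0∞ := B.indicator (fun x => h (pM N N x - pS N N x)) with hI₂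
  set I₁ : (Fin N → ℝ) → ℝ≥0∞ := B.indicator (fun x => h (pM N N x - pS N j x)) with hI₁
  have hI₂m : Measurable I₂ :=
    (hh.comp ((measurable_pM N N).sub (measurable_pS N N))).indicator hB
  have hI₁m : Measurable I₁ :=
    (hh.comp ((measurable_pM N N).sub (measurable_pS N j))).indicator hB
  have hpoint : ∀ x, I₂ x + I₂ (op N j x) ≤ I₁ x + I₁ (op N j x) := by
    intro x
    by_cases hx : x ∈ B
    · have hox : op N j x ∈ B := (hBop x).mpr hx
      rw [hI₁, hI₂, Set.indicator_of_mem hx, Set.indicator_of_mem hox,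
        Set.indicator_of_mem hx, Set.indicator_of_mem hox]
      have hd0 : (0:ℝ) ≤ pM N j x - pS N j x := by
        have := pS_le_pM j x; linarith
      have hm0 : (0:ℝ) ≤ pT N j hj x - pS N j x := by
        have := pS_le_pT hj j le_rfl hj x; linarith
      have hsm : pS N N x - pS N j x ≤ pT N j hj x - pS N j x := by
        have := pS_le_pT hj N hj le_rfl x; linarith
      have hkey' := hkey _ _ _ hd0 hm0 hsm
      have harith : j + N - N = j := by omega
      have id1 : pM N N x - pS N j x
          = max (pM N j x - pS N j x) (pT N j hj x - pS N j x) := by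
        rw [pM_split hj x, ← max_sub_sub_right]
      have id2 : pM N N x - pS N N x
          = max (pM N j x - pS N j x) (pT N j hj x - pS N j x)
            - (pS N N x - pS N j x) := by
        rw [pM_split hj x, max_sub_sub_right]; ring
      have id3 : pM N N (op N j x) - pS N j (op N j x)
          = max (pM N j x - pS N j x)
              (pT N j hj x - pS N j x - (pS N N x - pS N j x)) := by
        rw [pM_op hj x, pS_op_low hj j le_rfl x, ← max_sub_sub_right]
        congr 1 <;> ring
      have id4 : pM N N (op N j x) - pS N N (op N j x)
          = max (pM N j x - pS N j x + (pS N N x - pS N j x))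
              (pT N j hj x - pS N j x) := by
        rw [pM_op hj x, pS_op_high hj N hj le_rfl x, harith, ← max_sub_sub_right]
        congr 1 <;> ring
      rw [id2, id4, id1, id3]
      exact hkey'
    · have hox : op N j x ∉ B := fun hc => hx ((hBop x).mp hc)
      rw [hI₁, hI₂, Set.indicator_of_notMem hx, Set.indicator_of_notMem hox,
        Set.indicator_of_notMem hx, Set.indicator_of_notMem hox]
  have htwo : ∫⁻ x, I₂ x ∂π + ∫⁻ x, I₂ x ∂π ≤ ∫⁻ x, I₁ x ∂π + ∫⁻ x, I₁ x ∂π := by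
    calc ∫⁻ x, I₂ x ∂π + ∫⁻ x, I₂ x ∂π
        = ∫⁻ x, I₂ x ∂π + ∫⁻ x, I₂ (op N j x) ∂π := by
          rw [← lintegral_op_inv μ hj hneg hI₂m]
      _ = ∫⁻ x, (I₂ x + I₂ (op N j x)) ∂π := by
          rw [lintegral_add_left hI₂m]
      _ ≤ ∫⁻ x, (I₁ x + I₁ (op N j x)) ∂π := lintegral_mono hpoint
      _ = ∫⁻ x, I₁ x ∂π + ∫⁻ x, I₁ (op N j x) ∂π := by
          rw [lintegral_add_left hI₁m]
      _ = ∫⁻ x, I₁ x ∂π + ∫⁻ x, I₁ x ∂π := by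
          rw [← lintegral_op_inv μ hj hneg hI₁m]
  have h2 : (2:ℝ≥0∞) * ∫⁻ x, I₂ x ∂π ≤ 2 * ∫⁻ x, I₁ x ∂π := by
    rw [two_mul, two_mul]; exact htwo
  have hfin := (ENNReal.mul_le_mul_iff_right (two_ne_zero) (by norm_num)).mp h2
  rw [hI₂, hI₁, lintegral_indicator hB, lintegral_indicator hB] at hfin
  exact hfin

/-- equality version on the event where the deficiency at time `j` vanishes -/
lemma slice_core_eq (hj : j ≤ N) (hneg : μ.map (fun t => -t) = μ)
    {B : Set (Fin N → ℝ)} (hB : MeasurableSet B)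
    (hBop : ∀ x, op N j x ∈ B ↔ x ∈ B)
    (hB0 : ∀ x ∈ B, pM N j x = pS N j x)
    {h : ℝ → ℝ≥0∞} (hh : Measurable h) :
    ∫⁻ x in B, h (pM N N x - pS N N x) ∂(Measure.pi (fun _ : Fin N => μ))
      = ∫⁻ x in B, h (pM N N x - pS N j x) ∂(Measure.pi (fun _ : Fin N => μ)) := by
  classical
  set π := Measure.pi (fun _ : Fin N => μ) with hπdef
  set I₂ : (Fin N → ℝ) → ℝ≥0∞ := B.indicator (fun x => h (pM N N x - pS N N x)) with hI₂
  set I₁ : (Fin N → ℝ) → ℝ≥0∞ := B.indicator (fun x => h (pM N N x - pS N j x)) with hI₁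
  have hI₂m : Measurable I₂ :=
    (hh.comp ((measurable_pM N N).sub (measurable_pS N N))).indicator hB
  have hpoint : ∀ x, I₂ (op N j x) = I₁ x := by
    intro x
    by_cases hx : x ∈ B
    · have hox : op N j x ∈ B := (hBop x).mpr hx
      rw [hI₁, hI₂, Set.indicator_of_mem hx, Set.indicator_of_mem hox]
      have hd : pM N j x = pS N j x := hB0 x hx
      have hsm : pS N N x ≤ pT N j hj x := pS_le_pT hj N hj le_rfl x
      have hj0 : pS N j x ≤ pT N j hj x := pS_le_pT hj j le_rfl hj x
      have harith : j + N - N = j := by omega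
      have e2 : pM N N (op N j x) - pS N N (op N j x) = pT N j hj x - pS N j x := by
        rw [pM_op hj x, pS_op_high hj N hj le_rfl x, harith, hd,
          max_eq_right (by linarith : pS N j x ≤ pS N j x - pS N N x + pT N j hj x)]
        ring
      have e1 : pM N N x - pS N j x = pT N j hj x - pS N j x := by
        rw [pM_split hj x, hd, max_eq_right hj0]
      rw [e2, e1]
    · have hox : op N j x ∉ B := fun hc => hx ((hBop x).mp hc)
      rw [hI₁, hI₂, Set.indicator_of_notMem hx, Set.indicator_of_notMem hox]
  calc ∫⁻ x in B, h (pM N N x - pS N N x) ∂π = ∫⁻ x, I₂ x ∂π := by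
        rw [hI₂, lintegral_indicator hB]
    _ = ∫⁻ x, I₂ (op N j x) ∂π := lintegral_op_inv μ hj hneg hI₂m
    _ = ∫⁻ x, I₁ x ∂π := by simp only [hpoint]
    _ = ∫⁻ x in B, h (pM N N x - pS N j x) ∂π := by
        rw [hI₁, lintegral_indicator hB]

end MeasureStuff

lemma pS_eq {N k : ℕ} (hk : k ≤ N) (y : Fin N → ℝ) (g : ℕ → ℝ)
    (hg : ∀ i : Fin N, y i = g (i : ℕ)) :
    pS N k y = ∑ n ∈ Finset.range k, g n := by
  unfold pS
  have h1 : ∀ i : Fin N, (if (i:ℕ) < k then y i else 0)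
      = (fun n : ℕ => if n < k then g n else 0) (i : ℕ) := by
    intro i
    dsimp only
    split
    · exact hg i
    · rfl
  rw [Finset.sum_congr rfl fun i _ => h1 i,
    Fin.sum_univ_eq_sum_range (fun n : ℕ => if n < k then g n else 0) N,
    ← Finset.sum_filter]
  congr 1
  ext n
  simp only [Finset.mem_filter, Finset.mem_range]
  omega

lemma sup'_range_eq_ciSup {k : ℕ} (g : ℕ → ℝ) :
    (Finset.range (k+1)).sup' Finset.nonempty_range_add_one g = ⨆ l : Fin (k+1), g l := by
  apply le_antisymm
  · refine Finset.sup'_le _ _ fun l hl => ?_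
    have hl' := Finset.mem_range.mp hl
    exact le_ciSup (f := fun l : Fin (k+1) => g (l:ℕ))
      (Set.Finite.bddAbove (Set.finite_range _)) (⟨l, hl'⟩ : Fin (k+1))
  · exact ciSup_le fun l => Finset.le_sup' g (Finset.mem_range.mpr l.isLt)

section VecLaw

open ProbabilityTheory

variable {Ω : Type*} [MeasurableSpace Ω] (P : Measure Ω) [IsProbabilityMeasure P]
  (ξ : ℕ → Ω → ℝ)

lemma map_vec_eq_pi (hξmeas : ∀ i, Measurable (ξ i)) (N : ℕ)
    (hindep : iIndepFun ξ P)
    (hid : ∀ i, Measure.map (ξ i) P = Measure.map (ξ 0) P) :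
    P.map (fun ω (i : Fin N) => ξ i ω) = Measure.pi (fun _ : Fin N => P.map (ξ 0)) := by
  haveI : IsProbabilityMeasure (P.map (ξ 0)) :=
    Measure.isProbabilityMeasure_map (hξmeas 0).aemeasurable
  refine (Measure.pi_eq fun s hs => ?_).symm
  classical
  set sets : ℕ → Set ℝ := fun n => if h : n < N then s ⟨n, h⟩ else Set.univ with hsets
  have hms : ∀ n, MeasurableSet (sets n) := by
    intro n; rw [hsets]; dsimp only; split
    · exact hs _
    · exact MeasurableSet.univ
  have hvec : Measurable (fun ω (i : Fin N) => ξ i ω) :=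
    measurable_pi_lambda _ fun i => hξmeas i
  rw [Measure.map_apply hvec (MeasurableSet.univ_pi hs)]
  have hpre : (fun ω (i : Fin N) => ξ i ω) ⁻¹' Set.pi Set.univ s
      = ⋂ n ∈ Finset.range N, ξ n ⁻¹' sets n := by
    ext ω
    simp only [Set.mem_preimage, Set.mem_pi, Set.mem_univ, true_implies, Set.mem_iInter,
      Finset.mem_range]
    constructor
    · intro H n hn
      rw [hsets]; dsimp only; rw [dif_pos hn]
      exact H ⟨n, hn⟩
    · intro H i
      have h2 := H (i:ℕ) i.isLt
      rw [hsets] at h2; dsimp only at h2; rw [dif_pos i.isLt] at h2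
      exact h2
  rw [hpre, hindep.measure_inter_preimage_eq_mul (Finset.range N) (fun n _ => hms n),
    ← Fin.prod_univ_eq_prod_range (fun n => P (ξ n ⁻¹' sets n)) N]
  refine Finset.prod_congr rfl fun i _ => ?_
  rw [← Measure.map_apply (hξmeas i) (hms i), hid i]
  congr 1
  rw [hsets]; dsimp only; rw [dif_pos i.isLt]

end VecLaw

end RWOpt

/-- Theorem 2.1(iii): for a random walk with i.i.d. symmetric steps and
`f : [0,∞) → ℝ` nonincreasing and convex, any stopping time `τ ≤ N` with
`P(X τ = M τ or τ = N) = 1` attains the supremum of `E[f(M N - X σ)]` over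
all stopping times `σ ≤ N`: for every such `σ`,
`E[f(M N - X σ)] ≤ E[f(M N - X τ)]`.  Since `f ≤ f 0` on `[0,∞)`, the
inequality of expectations (possibly `-∞`) is expressed through the Lebesgue
integrals of `f 0 - f (⋯) ≥ 0`. -/
theorem randomWalk_symmetric_optimal_rules {Ω : Type*} [MeasurableSpace Ω]
    (P : Measure Ω) [IsProbabilityMeasure P]
    (ξ : ℕ → Ω → ℝ) (hξmeas : ∀ i, Measurable (ξ i))
    (hindep : iIndepFun ξ P)
    (hid : ∀ i, Measure.map (ξ i) P = Measure.map (ξ 0) P)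
    (hsymm : Measure.map (ξ 0) P = Measure.map (fun ω => -ξ 0 ω) P)
    (X : ℕ → Ω → ℝ) (hX : ∀ n ω, X n ω = ∑ i ∈ range n, ξ i ω)
    (hXmeas : ∀ n, StronglyMeasurable (X n))
    (M : ℕ → Ω → ℝ) (hM : ∀ n ω, M n ω = ⨆ k : Fin (n + 1), X k ω)
    (f : ℝ → ℝ) (hmono : AntitoneOn f (Set.Ici 0))
    (hconv : ConvexOn ℝ (Set.Ici 0) f)
    (N : ℕ) (hN : 0 < N) (τ : Ω → ℕ)
    (hτ : IsStoppingTime (Filtration.natural X hXmeas) (fun ω => (τ ω : WithTop ℕ)))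
    (hτN : ∀ ω, τ ω ≤ N)
    (hτgood : P {ω | X (τ ω) ω = M (τ ω) ω ∨ τ ω = N} = 1) :
    ∀ σ : Ω → ℕ, IsStoppingTime (Filtration.natural X hXmeas) (fun ω => (σ ω : WithTop ℕ)) →
      (∀ ω, σ ω ≤ N) →
      ∫⁻ ω, ENNReal.ofReal (f 0 - f (M N ω - X (σ ω) ω)) ∂P ≥
        ∫⁻ ω, ENNReal.ofReal (f 0 - f (M N ω - X (τ ω) ω)) ∂P := by
  intro σ hσ hσN
  classical
  set ℱ := Filtration.natural X hXmeas with hℱ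
  set μ := P.map (ξ 0) with hμ
  haveI : IsProbabilityMeasure μ := Measure.isProbabilityMeasure_map (hξmeas 0).aemeasurable
  set π := Measure.pi (fun _ : Fin N => μ) with hπ
  set vec : Ω → (Fin N → ℝ) := fun ω i => ξ i ω with hvecdef
  have hvecm : Measurable vec := measurable_pi_lambda _ fun i => hξmeas i
  have hmap : P.map vec = π := RWOpt.map_vec_eq_pi P ξ hξmeas N hindep hid
  have hneg : μ.map (fun t : ℝ => -t) = μ := by
    rw [hμ, Measure.map_map measurable_neg (hξmeas 0)]
    exact hsymm.symm
  -- the modified payoff functions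
  set F : ℝ → ℝ := fun t => f (max t 0) with hFdef
  have hFanti : Antitone F := fun a b hab => hmono (Set.mem_Ici.mpr (le_max_right _ _))
      (Set.mem_Ici.mpr (le_max_right _ _)) (max_le_max hab le_rfl)
  have hFmeas : Measurable F := hFanti.measurable
  set h : ℝ → ℝ≥0∞ := fun t => ENNReal.ofReal (f 0 - F t) with hhdef
  have hhm : Measurable h := (measurable_const.sub hFmeas).ennreal_ofReal
  have hFf : ∀ t : ℝ, 0 ≤ t → F t = f t := by
    intro t ht; rw [hFdef]; dsimp only; rw [max_eq_left ht]
  have hfle : ∀ t : ℝ, 0 ≤ t → f t ≤ f 0 :=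
    fun t ht => hmono (Set.mem_Ici.mpr le_rfl) (Set.mem_Ici.mpr ht) ht
  -- the key convexity inequality, in `h`-form
  have hkey : ∀ d m s : ℝ, 0 ≤ d → 0 ≤ m → s ≤ m →
      h (max d m - s) + h (max (d+s) m) ≤ h (max d m) + h (max d (m-s)) := by
    intro d m s hd hm hsm
    have hL := rwopt_L1 hmono hconv hd hm hsm
    have a1 : (0:ℝ) ≤ max d m - s := by have := le_max_right d m; linarith
    have a2 : (0:ℝ) ≤ max (d+s) m := le_trans hm (le_max_right _ _)
    have a3 : (0:ℝ) ≤ max d m := le_trans hm (le_max_right _ _)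
    have a4 : (0:ℝ) ≤ max d (m-s) := le_trans hd (le_max_left _ _)
    rw [hhdef]; dsimp only
    rw [hFf _ a1, hFf _ a2, hFf _ a3, hFf _ a4,
      ← ENNReal.ofReal_add (by have := hfle _ a1; linarith) (by have := hfle _ a2; linarith),
      ← ENNReal.ofReal_add (by have := hfle _ a3; linarith) (by have := hfle _ a4; linarith)]
    exact ENNReal.ofReal_le_ofReal (by linarith)
  -- identification with path-space functions
  have hXvec : ∀ k, k ≤ N → ∀ ω, X k ω = RWOpt.pS N k (vec ω) := by
    intro k hk ω
    rw [hX k ω, RWOpt.pS_eq hk (vec ω) (fun n => ξ n ω) (fun i => rfl)]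
  have hMvec : ∀ k, k ≤ N → ∀ ω, M k ω = RWOpt.pM N k (vec ω) := by
    intro k hk ω
    rw [hM k ω]
    unfold RWOpt.pM
    rw [Finset.sup'_congr Finset.nonempty_range_add_one rfl
      (fun l hl => (hXvec l (by rw [Finset.mem_range] at hl; omega) ω).symm),
      RWOpt.sup'_range_eq_ciSup]
  have hMXnonneg : ∀ k, k ≤ N → ∀ ω, X k ω ≤ M N ω := by
    intro k hk ω
    rw [hM N ω]
    exact le_ciSup (f := fun l : Fin (N+1) => X (l:ℕ) ω)
      (Set.Finite.bddAbove (Set.finite_range _)) (⟨k, by omega⟩ : Fin (N+1))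
  -- representation of stopping-time slices as cylinder events
  have repr : ∀ (ρ : Ω → ℕ), IsStoppingTime ℱ (fun ω => (ρ ω : WithTop ℕ)) → ∀ j, j ≤ N →
      ∃ B : Set (Fin N → ℝ), MeasurableSet B ∧ (∀ x, RWOpt.op N j x ∈ B ↔ x ∈ B) ∧
        {ω | ρ ω = j} = vec ⁻¹' B := by
    intro ρ hρ j hj
    have hmeasj : MeasurableSet[ℱ j] {ω | ρ ω = j} := by simpa using hρ.measurableSet_eq j
    set vecj : Ω → (Fin j → ℝ) := fun ω i => ξ i ω with hvecj
    set restr : (Fin N → ℝ) → (Fin j → ℝ) :=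
      fun x i => x ⟨(i:ℕ), lt_of_lt_of_le i.isLt hj⟩ with hrestr
    have hrestrm : Measurable restr :=
      measurable_pi_lambda _ fun i => measurable_pi_apply _
    have hle : ℱ j ≤ MeasurableSpace.comap vecj inferInstance := by
      rw [hℱ]
      refine iSup₂_le fun k hk => ?_
      have hXk : X k = (RWOpt.pS j k) ∘ vecj := by
        funext ω
        rw [Function.comp_apply, hX k ω]
        exact (RWOpt.pS_eq hk (vecj ω) (fun n => ξ n ω) (fun i => rfl)).symm
      rw [hXk, ← MeasurableSpace.comap_comp]
      exact MeasurableSpace.comap_mono (RWOpt.measurable_pS j k).comap_le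
    obtain ⟨B₀, hB₀m, hB₀eq⟩ := hle _ hmeasj
    have hcomp : vecj = restr ∘ vec := by funext ω i; rfl
    refine ⟨restr ⁻¹' B₀, hrestrm hB₀m, ?_, ?_⟩
    · intro x
      have : restr (RWOpt.op N j x) = restr x := by
        funext i
        rw [hrestr]
        dsimp only
        show RWOpt.op N j x ⟨(i:ℕ), _⟩ = x ⟨(i:ℕ), _⟩
        unfold RWOpt.op
        rw [if_pos (show ((⟨(i:ℕ), lt_of_lt_of_le i.isLt hj⟩ : Fin N) : ℕ) < j from i.isLt)]
      simp only [Set.mem_preimage, this]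
    · rw [← hB₀eq, hcomp, Set.preimage_comp]
  -- transfer of slice integrals to path space
  have transfer : ∀ (B : Set (Fin N → ℝ)), MeasurableSet B → ∀ k, k ≤ N →
      ∫⁻ ω in vec ⁻¹' B, h (M N ω - X k ω) ∂P
        = ∫⁻ x in B, h (RWOpt.pM N N x - RWOpt.pS N k x) ∂π := by
    intro B hB k hk
    have hGm : Measurable (fun x => h (RWOpt.pM N N x - RWOpt.pS N k x)) :=
      hhm.comp ((RWOpt.measurable_pM N N).sub (RWOpt.measurable_pS N k))
    calc ∫⁻ ω in vec ⁻¹' B, h (M N ω - X k ω) ∂P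
        = ∫⁻ ω in vec ⁻¹' B, (fun x => h (RWOpt.pM N N x - RWOpt.pS N k x)) (vec ω) ∂P := by
          refine setLIntegral_congr_fun (hvecm hB) (fun ω _ => ?_)
          rw [hMvec N le_rfl ω, hXvec k hk ω]
      _ = ∫⁻ x in B, h (RWOpt.pM N N x - RWOpt.pS N k x) ∂(P.map vec) :=
          (setLIntegral_map hB hGm hvecm).symm
      _ = ∫⁻ x in B, h (RWOpt.pM N N x - RWOpt.pS N k x) ∂π := by rw [hmap]
  -- slice inequality
  have sliceΩ : ∀ (ρ : Ω → ℕ), IsStoppingTime ℱ (fun ω => (ρ ω : WithTop ℕ)) → ∀ j, j ≤ N →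
      ∫⁻ ω in {ω | ρ ω = j}, h (M N ω - X N ω) ∂P
        ≤ ∫⁻ ω in {ω | ρ ω = j}, h (M N ω - X j ω) ∂P := by
    intro ρ hρ j hj
    obtain ⟨B, hB, hBop, hAeq⟩ := repr ρ hρ j hj
    rw [hAeq, transfer B hB N le_rfl, transfer B hB j hj]
    exact RWOpt.slice_core μ hj hneg hB hBop hhm hkey
  -- slice equality for the good rule τ
  have sliceτ : ∀ j, j ≤ N →
      ∫⁻ ω in {ω | τ ω = j}, h (M N ω - X N ω) ∂P
        = ∫⁻ ω in {ω | τ ω = j}, h (M N ω - X j ω) ∂P := by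
    intro j hj
    rcases eq_or_lt_of_le hj with rfl | hjN
    · rfl
    · obtain ⟨B, hB, hBop, hAeq⟩ := repr τ hτ j hj
      set D : Set (Fin N → ℝ) := {x | RWOpt.pM N j x = RWOpt.pS N j x} with hD
      have hDm : MeasurableSet D :=
        measurableSet_eq_fun (RWOpt.measurable_pM N j) (RWOpt.measurable_pS N j)
      have hDop : ∀ x, RWOpt.op N j x ∈ D ↔ x ∈ D := by
        intro x
        simp only [hD, Set.mem_setOf_eq, RWOpt.pM_op_low hj, RWOpt.pS_op_low hj j le_rfl]
      have hMjm : Measurable (M j) := by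
        have : M j = fun ω => RWOpt.pM N j (vec ω) := funext fun ω => hMvec j hj ω
        rw [this]
        exact (RWOpt.measurable_pM N j).comp hvecm
      have hEm : MeasurableSet {ω | M j ω = X j ω} :=
        measurableSet_eq_fun hMjm (hXmeas j).measurable
      have hA'eq : {ω | τ ω = j} ∩ {ω | M j ω = X j ω} = vec ⁻¹' (B ∩ D) := by
        rw [Set.preimage_inter, ← hAeq]
        congr 1
        ext ω
        simp only [Set.mem_setOf_eq, Set.mem_preimage, hD, hMvec j hj ω, hXvec j hj ω]
      set Z := {ω | τ ω = j} \ {ω | M j ω = X j ω} with hZ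
      have hZm : MeasurableSet Z := ((ℱ.le j) _ (by simpa using hτ.measurableSet_eq j)).diff hEm
      have hZnull : P Z = 0 := by
        have hsub : {ω | X (τ ω) ω = M (τ ω) ω ∨ τ ω = N} ⊆ Zᶜ := by
          intro ω hω hωZ
          rw [hZ] at hωZ
          obtain ⟨h1, h2⟩ := hωZ
          rw [Set.mem_setOf_eq] at h1
          rcases hω with hg | hg
          · rw [h1] at hg
            exact h2 hg.symm
          · omega
        have h1 : (1:ℝ≥0∞) ≤ P Zᶜ := hτgood ▸ measure_mono hsub
        have h2 : P Zᶜ = 1 := le_antisymm prob_le_one h1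
        have h3 := prob_add_prob_compl (μ := P) hZm
        rw [h2] at h3
        have h4 : P Z + 1 = 0 + 1 := by rw [zero_add]; exact h3
        exact (ENNReal.add_left_inj (by norm_num)).mp h4
      have hsplit : ∀ k, k ≤ N → ∫⁻ ω in {ω | τ ω = j}, h (M N ω - X k ω) ∂P
          = ∫⁻ ω in {ω | τ ω = j} ∩ {ω | M j ω = X j ω}, h (M N ω - X k ω) ∂P := by
        intro k hk
        have hun : {ω | τ ω = j} = ({ω | τ ω = j} ∩ {ω | M j ω = X j ω}) ∪ Z := by
          rw [hZ]; exact (Set.inter_union_diff _ _).symm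
        have hdisj : Disjoint ({ω | τ ω = j} ∩ {ω | M j ω = X j ω}) Z := by
          rw [hZ]
          exact Set.disjoint_of_subset_left Set.inter_subset_right Set.disjoint_sdiff_right
        conv_lhs => rw [hun]
        rw [lintegral_union hZm hdisj, setLIntegral_measure_zero _ _ hZnull, add_zero]
      rw [hsplit N le_rfl, hsplit j hj, hA'eq, transfer _ (hB.inter hDm) N le_rfl,
        transfer _ (hB.inter hDm) j hj]
      exact RWOpt.slice_core_eq μ hj hneg (hB.inter hDm)
        (fun x => by simp only [Set.mem_inter_iff, hBop x, hDop x])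
        (fun x hx => hx.2) hhm
  -- measurability of level sets
  have hslice_m : ∀ (ρ : Ω → ℕ), IsStoppingTime ℱ (fun ω => (ρ ω : WithTop ℕ)) → ∀ n, MeasurableSet {ω | ρ ω = n} :=
    fun ρ hρ n => (ℱ.le n) _ (by simpa using hρ.measurableSet_eq n)
  have htail_m : ∀ (ρ : Ω → ℕ), IsStoppingTime ℱ (fun ω => (ρ ω : WithTop ℕ)) → ∀ k, MeasurableSet {ω | k ≤ ρ ω} := by
    intro ρ hρ k
    have : {ω | k ≤ ρ ω} = ⋃ (n : ℕ), ⋃ (_ : k ≤ n), {ω | ρ ω = n} := by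
      ext ω; simp only [Set.mem_setOf_eq, Set.mem_iUnion]
      exact ⟨fun hh => ⟨ρ ω, hh, rfl⟩, fun ⟨n, hn, he⟩ => he ▸ hn⟩
    rw [this]
    exact MeasurableSet.iUnion fun n => MeasurableSet.iUnion fun _ => hslice_m ρ hρ n
  -- tail splitting
  have htail_split : ∀ (ρ : Ω → ℕ), IsStoppingTime ℱ (fun ω => (ρ ω : WithTop ℕ)) → ∀ k, ∀ (G : Ω → ℝ≥0∞),
      ∫⁻ ω in {ω | k ≤ ρ ω}, G ω ∂P
        = ∫⁻ ω in {ω | ρ ω = k}, G ω ∂P + ∫⁻ ω in {ω | k + 1 ≤ ρ ω}, G ω ∂P := by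
    intro ρ hρ k G
    have hun : {ω | k ≤ ρ ω} = {ω | ρ ω = k} ∪ {ω | k + 1 ≤ ρ ω} := by
      ext ω; simp only [Set.mem_setOf_eq, Set.mem_union]; omega
    have hdisj : Disjoint {ω | ρ ω = k} {ω | k + 1 ≤ ρ ω} := by
      rw [Set.disjoint_left]; intro ω h1 h2
      rw [Set.mem_setOf_eq] at h1 h2; omega
    rw [hun, lintegral_union (htail_m ρ hρ (k+1)) hdisj]
  -- the partition identity : total cost = sum of slice costs
  have hpart : ∀ (ρ : Ω → ℕ), IsStoppingTime ℱ (fun ω => (ρ ω : WithTop ℕ)) → (∀ ω, ρ ω ≤ N) →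
      ∫⁻ ω, h (M N ω - X (ρ ω) ω) ∂P
        = ∑ n ∈ Finset.range (N+1), ∫⁻ ω in {ω | ρ ω = n}, h (M N ω - X n ω) ∂P := by
    intro ρ hρ hρN
    have hstep : ∀ k, k ≤ N + 1 →
        ∫⁻ ω, h (M N ω - X (ρ ω) ω) ∂P
          = (∑ n ∈ Finset.range k, ∫⁻ ω in {ω | ρ ω = n}, h (M N ω - X n ω) ∂P)
            + ∫⁻ ω in {ω | k ≤ ρ ω}, h (M N ω - X (ρ ω) ω) ∂P := by
      intro k hk
      induction k with
      | zero =>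
        simp only [Finset.range_zero, Finset.sum_empty, zero_add]
        have : {ω | 0 ≤ ρ ω} = Set.univ := by ext ω; simp
        rw [this, Measure.restrict_univ]
      | succ k ih =>
        rw [ih (by omega), htail_split ρ hρ k _, Finset.sum_range_succ]
        have hcongr : ∫⁻ ω in {ω | ρ ω = k}, h (M N ω - X (ρ ω) ω) ∂P
            = ∫⁻ ω in {ω | ρ ω = k}, h (M N ω - X k ω) ∂P := by
          refine setLIntegral_congr_fun (hslice_m ρ hρ k) (fun ω hω => ?_)
          rw [Set.mem_setOf_eq] at hω
          rw [hω]
        rw [hcongr]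
        ring
    have hfin := hstep (N+1) le_rfl
    have hempty : {ω | N + 1 ≤ ρ ω} = (∅ : Set Ω) := by
      ext ω; simp only [Set.mem_setOf_eq, Set.mem_empty_iff_false, iff_false]
      have := hρN ω; omega
    rw [hempty, Measure.restrict_empty, lintegral_zero_measure, add_zero] at hfin
    exact hfin
  -- the chain inequality
  have hchain : ∀ (ρ : Ω → ℕ), IsStoppingTime ℱ (fun ω => (ρ ω : WithTop ℕ)) → (∀ ω, ρ ω ≤ N) →
      ∫⁻ ω, h (M N ω - X N ω) ∂P
        ≤ ∑ n ∈ Finset.range (N+1), ∫⁻ ω in {ω | ρ ω = n}, h (M N ω - X n ω) ∂P := by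
    intro ρ hρ hρN
    have hstep : ∀ k, k ≤ N + 1 →
        ∫⁻ ω, h (M N ω - X N ω) ∂P
          ≤ (∑ n ∈ Finset.range k, ∫⁻ ω in {ω | ρ ω = n}, h (M N ω - X n ω) ∂P)
            + ∫⁻ ω in {ω | k ≤ ρ ω}, h (M N ω - X N ω) ∂P := by
      intro k hk
      induction k with
      | zero =>
        simp only [Finset.range_zero, Finset.sum_empty, zero_add]
        have : {ω | 0 ≤ ρ ω} = Set.univ := by ext ω; simp
        rw [this, Measure.restrict_univ]
      | succ k ih =>
        refine le_trans (ih (by omega)) ?_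
        rw [htail_split ρ hρ k _, Finset.sum_range_succ]
        calc (∑ n ∈ Finset.range k, ∫⁻ ω in {ω | ρ ω = n}, h (M N ω - X n ω) ∂P)
              + (∫⁻ ω in {ω | ρ ω = k}, h (M N ω - X N ω) ∂P
                + ∫⁻ ω in {ω | k + 1 ≤ ρ ω}, h (M N ω - X N ω) ∂P)
            ≤ (∑ n ∈ Finset.range k, ∫⁻ ω in {ω | ρ ω = n}, h (M N ω - X n ω) ∂P)
              + (∫⁻ ω in {ω | ρ ω = k}, h (M N ω - X k ω) ∂P
                + ∫⁻ ω in {ω | k + 1 ≤ ρ ω}, h (M N ω - X N ω) ∂P) := by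
              exact add_le_add le_rfl (add_le_add (sliceΩ ρ hρ k (by omega)) le_rfl)
          _ = _ := by ring
    have hfin := hstep (N+1) le_rfl
    have hempty : {ω | N + 1 ≤ ρ ω} = (∅ : Set Ω) := by
      ext ω; simp only [Set.mem_setOf_eq, Set.mem_empty_iff_false, iff_false]
      have := hρN ω; omega
    rw [hempty, Measure.restrict_empty, lintegral_zero_measure, add_zero] at hfin
    exact hfin
  -- the chain equality for τ
  have hchainτ : ∫⁻ ω, h (M N ω - X N ω) ∂P
      = ∑ n ∈ Finset.range (N+1), ∫⁻ ω in {ω | τ ω = n}, h (M N ω - X n ω) ∂P := by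
    have hstep : ∀ k, k ≤ N + 1 →
        ∫⁻ ω, h (M N ω - X N ω) ∂P
          = (∑ n ∈ Finset.range k, ∫⁻ ω in {ω | τ ω = n}, h (M N ω - X n ω) ∂P)
            + ∫⁻ ω in {ω | k ≤ τ ω}, h (M N ω - X N ω) ∂P := by
      intro k hk
      induction k with
      | zero =>
        simp only [Finset.range_zero, Finset.sum_empty, zero_add]
        have : {ω | 0 ≤ τ ω} = Set.univ := by ext ω; simp
        rw [this, Measure.restrict_univ]
      | succ k ih =>
        rw [ih (by omega), htail_split τ hτ k _, Finset.sum_range_succ,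
          sliceτ k (by omega)]
        ring
    have hfin := hstep (N+1) le_rfl
    have hempty : {ω | N + 1 ≤ τ ω} = (∅ : Set Ω) := by
      ext ω; simp only [Set.mem_setOf_eq, Set.mem_empty_iff_false, iff_false]
      have := hτN ω; omega
    rw [hempty, Measure.restrict_empty, lintegral_zero_measure, add_zero] at hfin
    exact hfin
  -- put everything together
  have hgoal₁ : ∀ (ρ : Ω → ℕ), (∀ ω, ρ ω ≤ N) →
      ∫⁻ ω, ENNReal.ofReal (f 0 - f (M N ω - X (ρ ω) ω)) ∂P
        = ∫⁻ ω, h (M N ω - X (ρ ω) ω) ∂P := by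
    intro ρ hρN
    refine lintegral_congr fun ω => ?_
    rw [hhdef]
    dsimp only
    rw [hFf _ (by have := hMXnonneg (ρ ω) (hρN ω) ω; linarith)]
  rw [ge_iff_le, hgoal₁ τ hτN, hgoal₁ σ hσN, hpart τ hτ hτN, hpart σ hσ hσN, ← hchainτ]
  exact hchain σ hσ hσN
end
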